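/- arXiv:1811.02739 — 6 statements merged into one kernel-verified Lean document; each statement's English description precedes it below -/
import Mathlib

section
/- Let p be an odd prime, n a positive integer, and for 1 ≤ i ≤ n let S_i be a finite set and f_i : S_i → F_p a function. For each i let v_{i,+} be the number of x ∈ S_i such that f_i(x) is a nonzero square in F_p, and v_{i,-} the number of x ∈ S_i such that f_i(x) is a nonsquare. Then the number of tuples (x_1, …, x_n, s) ∈ S_1 × ⋯ × S_n × F_p with s^2 = ∏_{i=1}^n f_i(x_i) equals ∏_{i=1}^n |S_i| + ∏_{i=1}^n (v_{i,+} − v_{i,-}). -/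
/-- Lemma 3.4 of the paper.
Let `p` be an odd prime, `n` a positive integer, and for `1 ≤ i ≤ n` let `S i` be a finite
set and `f i : S i → F_p` a function.  Let `v_{i,+}` be the number of `x ∈ S i` with
`f i x` a nonzero square and `v_{i,-}` the number with `f i x` a nonsquare.  Then the number
of tuples `(x_1, …, x_n, s)` with `s ^ 2 = ∏ i, f i (x i)` equals
`∏ i, #(S i) + ∏ i, (v_{i,+} - v_{i,-})`. -/
theorem statement0 (p : ℕ) [Fact p.Prime] (hodd : Odd p)
    (n : ℕ) (hn : 0 < n) (S : Fin n → Type*) [∀ i, Fintype (S i)]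
    (f : ∀ i, S i → ZMod p) :
    (Nat.card {xs : (∀ i, S i) × ZMod p // xs.2 ^ 2 = ∏ i, f i (xs.1 i)} : ℤ) =
      (∏ i, (Nat.card (S i) : ℤ)) +
      ∏ i, ((Nat.card {x : S i // f i x ≠ 0 ∧ IsSquare (f i x)} : ℤ) -
            (Nat.card {x : S i // ¬ IsSquare (f i x)} : ℤ)) := by
  classical
  have hp2 : ringChar (ZMod p) ≠ 2 := by
    rw [ZMod.ringChar_zmod_n]
    rintro rfl
    exact (Nat.not_odd_iff_even.mpr even_two) hodd
  set χ := quadraticChar (ZMod p) with hχ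
  -- pointwise value of χ
  have hval : ∀ a : ZMod p, (χ a : ℤ) =
      (if a ≠ 0 ∧ IsSquare a then (1 : ℤ) else 0) - (if ¬ IsSquare a then 1 else 0) := by
    intro a
    by_cases h0 : a = 0
    · simp [h0, χ]
    · by_cases hs : IsSquare a
      · simp [h0, hs, χ, (quadraticChar_one_iff_isSquare h0).mpr hs]
      · simp [h0, hs, χ, quadraticChar_neg_one_iff_not_isSquare.mpr hs]
  -- per-i sum
  have key : ∀ i, ∑ y : S i, (χ (f i y) : ℤ) =
      (Nat.card {x : S i // f i x ≠ 0 ∧ IsSquare (f i x)} : ℤ) -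
      (Nat.card {x : S i // ¬ IsSquare (f i x)} : ℤ) := by
    intro i
    rw [Nat.card_eq_fintype_card, Nat.card_eq_fintype_card,
        Fintype.card_subtype, Fintype.card_subtype]
    rw [Finset.sum_congr rfl fun y _ => hval (f i y), Finset.sum_sub_distrib]
    push_cast [Finset.sum_boole]
    rfl
  -- equivalence with sigma type
  have e : {xs : (∀ i, S i) × ZMod p // xs.2 ^ 2 = ∏ i, f i (xs.1 i)} ≃
      Σ x : ∀ i, S i, {s : ZMod p // s ^ 2 = ∏ i, f i (x i)} :=
    { toFun := fun a => ⟨a.1.1, a.1.2, a.2⟩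
      invFun := fun a => ⟨(a.1, a.2.1), a.2.2⟩
      left_inv := fun a => rfl
      right_inv := fun a => rfl }
  have hcard : ∀ x : ∀ i, S i,
      (Fintype.card {s : ZMod p // s ^ 2 = ∏ i, f i (x i)} : ℤ)
        = χ (∏ i, f i (x i)) + 1 := by
    intro x
    rw [← quadraticChar_card_sqrts hp2 (∏ i, f i (x i))]
    norm_cast
    rw [Set.toFinset_card]
    rfl
  rw [Nat.card_eq_fintype_card, Fintype.card_congr e, Fintype.card_sigma]
  push_cast
  rw [Finset.sum_congr rfl fun x _ => hcard x, Finset.sum_add_distrib]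
  have h1 : ∑ x : ∀ i, S i, ((χ (∏ i, f i (x i)) : ℤ)) =
      ∏ i, ∑ y : S i, (χ (f i y) : ℤ) := by
    rw [Finset.prod_univ_sum]
    rw [Fintype.piFinset_univ]
    congr 1
    ext x
    push_cast [map_prod]
    rfl
  have h2 : ∑ _x : ∀ i, S i, (1 : ℤ) = ∏ i, (Nat.card (S i) : ℤ) := by
    simp [Nat.card_eq_fintype_card, Fintype.card_pi]
  rw [h1, h2, Finset.prod_congr rfl fun i _ => key i, add_comm]
end

section
/- Let p be an odd prime and λ ∈ F_p with λ ≠ 0 and λ ≠ -1. Set F = #{(y_1,y_2,y_4,y_5,t) ∈ F_p^5 : t^2 = λ·y_1·y_2·(λ+y_1)·(y_1+y_2)·(y_2+1)·y_4·y_5·(1+y_4)·(y_4+y_5)·(y_5+λ)}, A = #{(y_1,y_2,v) ∈ F_p^3 : v^2 = (λ+1)·y_1·y_2·(λ+y_1)·(y_1+y_2)·(y_2+1)} and B = #{(y_4,y_5,w) ∈ F_p^3 : w^2 = λ·(λ+1)·y_4·y_5·(1+y_4)·(y_4+y_5)·(y_5+λ)}. Then F = A·B − p^2·A − p^2·B +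 2p^4. -/
open Finset

noncomputable def Ncnt (p : ℕ) [Fact p.Prime] (a : ZMod p) : ℕ :=
  Fintype.card {t : ZMod p // t ^ 2 = a}

lemma Ncnt_eq {p : ℕ} [Fact p.Prime] (hp : p ≠ 2) (a : ZMod p) :
    (Ncnt p a : ℤ) = quadraticChar (ZMod p) a + 1 := by
  have hchar : ringChar (ZMod p) ≠ 2 := by
    rw [ZMod.ringChar_zmod_n]; exact hp
  have := quadraticChar_card_sqrts hchar a
  rw [← this]
  congr 1
  rw [Set.toFinset_card]
  rfl

lemma card5 {p : ℕ} [Fact p.Prime]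
    (f : ZMod p → ZMod p → ZMod p → ZMod p → ZMod p) :
    Nat.card {v : ZMod p × ZMod p × ZMod p × ZMod p × ZMod p //
        v.2.2.2.2 ^ 2 = f v.1 v.2.1 v.2.2.1 v.2.2.2.1}
      = ∑ y : (ZMod p × ZMod p) × (ZMod p × ZMod p),
          Ncnt p (f y.1.1 y.1.2 y.2.1 y.2.2) := by
  have e : {v : ZMod p × ZMod p × ZMod p × ZMod p × ZMod p //
        v.2.2.2.2 ^ 2 = f v.1 v.2.1 v.2.2.1 v.2.2.2.1}
      ≃ (y : (ZMod p × ZMod p) × (ZMod p × ZMod p)) ×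
          {t : ZMod p // t ^ 2 = f y.1.1 y.1.2 y.2.1 y.2.2} :=
    { toFun := fun v => ⟨((v.1.1, v.1.2.1), (v.1.2.2.1, v.1.2.2.2.1)), v.1.2.2.2.2, v.2⟩
      invFun := fun s => ⟨(s.1.1.1, s.1.1.2, s.1.2.1, s.1.2.2, s.2.1), s.2.2⟩
      left_inv := fun _ => rfl
      right_inv := fun _ => rfl }
  rw [Nat.card_eq_fintype_card, Fintype.card_congr e, Fintype.card_sigma]
  rfl

lemma card3 {p : ℕ} [Fact p.Prime]
    (f : ZMod p → ZMod p → ZMod p) :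
    Nat.card {w : ZMod p × ZMod p × ZMod p // w.2.2 ^ 2 = f w.1 w.2.1}
      = ∑ y : ZMod p × ZMod p, Ncnt p (f y.1 y.2) := by
  have e : {w : ZMod p × ZMod p × ZMod p // w.2.2 ^ 2 = f w.1 w.2.1}
      ≃ (y : ZMod p × ZMod p) × {t : ZMod p // t ^ 2 = f y.1 y.2} :=
    { toFun := fun v => ⟨(v.1.1, v.1.2.1), v.1.2.2, v.2⟩
      invFun := fun s => ⟨(s.1.1, s.1.2, s.2.1), s.2.2⟩
      left_inv := fun _ => rfl
      right_inv := fun _ => rfl }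
  rw [Nat.card_eq_fintype_card, Fintype.card_congr e, Fintype.card_sigma]
  rfl

set_option maxHeartbeats 1000000 in
/-- Proposition 3.5 of the paper.
Let `p` be an odd prime and `λ ∈ F_p` with `λ ≠ 0, -1`.  Let `F` count the points
`(y₁,y₂,y₄,y₅,t) ∈ F_p^5` with
`t² = λ·y₁·y₂·(λ+y₁)·(y₁+y₂)·(y₂+1)·y₄·y₅·(1+y₄)·(y₄+y₅)·(y₅+λ)`,
let `A` count `(y₁,y₂,v)` with `v² = (λ+1)·y₁·y₂·(λ+y₁)·(y₁+y₂)·(y₂+1)` and `B` count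
`(y₄,y₅,w)` with `w² = λ·(λ+1)·y₄·y₅·(1+y₄)·(y₄+y₅)·(y₅+λ)`.  Then
`F = A·B − p²·A − p²·B + 2p⁴`. -/
theorem statement1 (p : ℕ) [Fact p.Prime] (hodd : Odd p)
    (lam : ZMod p) (h0 : lam ≠ 0) (h1 : lam ≠ -1)
    (F A B : ℕ)
    (hF : F = Nat.card {v : ZMod p × ZMod p × ZMod p × ZMod p × ZMod p //
      v.2.2.2.2 ^ 2 = lam * v.1 * v.2.1 * (lam + v.1) * (v.1 + v.2.1) * (v.2.1 + 1) *
        v.2.2.1 * v.2.2.2.1 * (1 + v.2.2.1) * (v.2.2.1 + v.2.2.2.1) * (v.2.2.2.1 + lam)})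
    (hA : A = Nat.card {w : ZMod p × ZMod p × ZMod p //
      w.2.2 ^ 2 = (lam + 1) * w.1 * w.2.1 * (lam + w.1) * (w.1 + w.2.1) * (w.2.1 + 1)})
    (hB : B = Nat.card {w : ZMod p × ZMod p × ZMod p //
      w.2.2 ^ 2 = lam * (lam + 1) * w.1 * w.2.1 * (1 + w.1) * (w.1 + w.2.1) * (w.2.1 + lam)}) :
    (F : ℤ) = A * B - p ^ 2 * A - p ^ 2 * B + 2 * p ^ 4 := by
  have hp2 : p ≠ 2 := by
    rintro rfl; exact (Nat.not_odd_iff_even.mpr even_two) hodd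
  have hlam1 : lam + 1 ≠ 0 := fun h => h1 (by linear_combination h)
  set χ := quadraticChar (ZMod p) with hχ
  set S₁ : ℤ := ∑ y : ZMod p × ZMod p,
    χ (lam * y.1 * y.2 * (lam + y.1) * (y.1 + y.2) * (y.2 + 1)) with hS₁
  set S₂ : ℤ := ∑ y : ZMod p × ZMod p,
    χ (y.1 * y.2 * (1 + y.1) * (y.1 + y.2) * (y.2 + lam)) with hS₂
  set c₁ : ℤ := χ ((lam + 1) * lam⁻¹) with hc₁
  set c₂ : ℤ := χ (lam * (lam + 1)) with hc₂
  have hcard : (Fintype.card (ZMod p × ZMod p) : ℤ) = p ^ 2 := by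
    rw [Fintype.card_prod, ZMod.card]; push_cast; ring
  -- F
  have hFval : (F : ℤ) = S₁ * S₂ + p ^ 4 := by
    have h5 := card5 (p := p) (fun a b c d =>
      lam * a * b * (lam + a) * (a + b) * (b + 1) * c * d * (1 + c) * (c + d) * (d + lam))
    beta_reduce at h5
    rw [hF, h5]
    push_cast
    have key : ∀ y : (ZMod p × ZMod p) × (ZMod p × ZMod p),
        (Ncnt p (lam * y.1.1 * y.1.2 * (lam + y.1.1) * (y.1.1 + y.1.2) * (y.1.2 + 1) * y.2.1 *
          y.2.2 * (1 + y.2.1) * (y.2.1 + y.2.2) * (y.2.2 + lam)) : ℤ)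
        = χ (lam * y.1.1 * y.1.2 * (lam + y.1.1) * (y.1.1 + y.1.2) * (y.1.2 + 1)) *
            χ (y.2.1 * y.2.2 * (1 + y.2.1) * (y.2.1 + y.2.2) * (y.2.2 + lam)) + 1 := by
      intro y
      rw [Ncnt_eq hp2, show lam * y.1.1 * y.1.2 * (lam + y.1.1) * (y.1.1 + y.1.2) * (y.1.2 + 1)
        * y.2.1 * y.2.2 * (1 + y.2.1) * (y.2.1 + y.2.2) * (y.2.2 + lam)
        = (lam * y.1.1 * y.1.2 * (lam + y.1.1) * (y.1.1 + y.1.2) * (y.1.2 + 1)) *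
          (y.2.1 * y.2.2 * (1 + y.2.1) * (y.2.1 + y.2.2) * (y.2.2 + lam)) from by ring, map_mul]
    rw [Finset.sum_congr rfl (fun y _ => key y), Finset.sum_add_distrib, Finset.sum_const,
      Fintype.sum_prod_type]
    dsimp only
    rw [Finset.sum_congr rfl (fun a _ => (Finset.mul_sum Finset.univ _ _).symm),
      ← Finset.sum_mul, ← hS₁]
    have hc4 : ((Finset.univ : Finset ((ZMod p × ZMod p) × (ZMod p × ZMod p))).card : ℤ)
        = p ^ 4 := by
      simp [ZMod.card]; ring
    rw [nsmul_eq_mul]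
    rw [hS₂]
    push_cast [hc4]
    ring
  -- A
  have hAval : (A : ℤ) = c₁ * S₁ + p ^ 2 := by
    have h3 := card3 (p := p) (fun a b =>
      (lam + 1) * a * b * (lam + a) * (a + b) * (b + 1))
    beta_reduce at h3
    rw [hA, h3]
    push_cast
    have key : ∀ y : ZMod p × ZMod p,
        (Ncnt p ((lam + 1) * y.1 * y.2 * (lam + y.1) * (y.1 + y.2) * (y.2 + 1)) : ℤ)
        = c₁ * χ (lam * y.1 * y.2 * (lam + y.1) * (y.1 + y.2) * (y.2 + 1)) + 1 := by
      intro y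
      rw [Ncnt_eq hp2, show (lam + 1) * y.1 * y.2 * (lam + y.1) * (y.1 + y.2) * (y.2 + 1)
        = ((lam + 1) * lam⁻¹) * (lam * y.1 * y.2 * (lam + y.1) * (y.1 + y.2) * (y.2 + 1)) from by
          field_simp, map_mul, hc₁]
    rw [Finset.sum_congr rfl (fun y _ => key y), Finset.sum_add_distrib, Finset.sum_const,
      ← Finset.mul_sum, ← hS₁, nsmul_eq_mul, Finset.card_univ]
    push_cast [hcard]
    ring
  -- B
  have hBval : (B : ℤ) = c₂ * S₂ + p ^ 2 := by
    have h3 := card3 (p := p) (fun a b =>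
      lam * (lam + 1) * a * b * (1 + a) * (a + b) * (b + lam))
    beta_reduce at h3
    rw [hB, h3]
    push_cast
    have key : ∀ y : ZMod p × ZMod p,
        (Ncnt p (lam * (lam + 1) * y.1 * y.2 * (1 + y.1) * (y.1 + y.2) * (y.2 + lam)) : ℤ)
        = c₂ * χ (y.1 * y.2 * (1 + y.1) * (y.1 + y.2) * (y.2 + lam)) + 1 := by
      intro y
      rw [Ncnt_eq hp2, show lam * (lam + 1) * y.1 * y.2 * (1 + y.1) * (y.1 + y.2) * (y.2 + lam)
        = (lam * (lam + 1)) * (y.1 * y.2 * (1 + y.1) * (y.1 + y.2) * (y.2 + lam)) from by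
          ring, map_mul, hc₂]
    rw [Finset.sum_congr rfl (fun y _ => key y), Finset.sum_add_distrib, Finset.sum_const,
      ← Finset.mul_sum, ← hS₂, nsmul_eq_mul, Finset.card_univ]
    push_cast [hcard]
    ring
  have hc : c₁ * c₂ = 1 := by
    rw [hc₁, hc₂, ← map_mul]
    have : (lam + 1) * lam⁻¹ * (lam * (lam + 1)) = (lam + 1) ^ 2 := by
      field_simp
    rw [this]
    exact quadraticChar_sq_one' hlam1
  rw [hFval, hAval, hBval]
  linear_combination -S₁ * S₂ * hc
end

section
/- Let p be an odd prime and let φ : F_p → ℤ be the quadratic character. Then #{(v,z_0,z_1,z_2) ∈ F_p^4 : (z_0,z_1,z_2) ≠ (0,0,0) and v^2 = z_0·z_1·z_2·(−z_0+z_1)·(z_1+z_2)·(z_0+z_2)} = (p−1)·(p^2 − φ(−1)·p + 1 + a_{-1,p}^2). -/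
namespace Statement5Aux
open Finset
variable {p : ℕ} [Fact p.Prime]

local notation "χ" => quadraticChar (ZMod p)

lemma hp2 (hodd : Odd p) : ringChar (ZMod p) ≠ 2 := by
  rw [ZMod.ringChar_zmod_n]; rintro rfl; simp [Nat.odd_iff] at hodd

lemma two_ne (hodd : Odd p) : (2 : ZMod p) ≠ 0 := by
  have h := hp2 (p := p) hodd
  rw [ZMod.ringChar_zmod_n] at h
  have : ((2:ℕ) : ZMod p) ≠ 0 := by
    rw [Ne, ZMod.natCast_eq_zero_iff]
    exact fun hd => h ((Nat.prime_dvd_prime_iff_eq (Fact.out) Nat.prime_two).mp hd)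
  simpa using this

lemma neg_one_ne_one (hodd : Odd p) : (1 : ZMod p) ≠ -1 := by
  intro h; apply two_ne hodd; linear_combination h

lemma chi_sq_mul (a b : ZMod p) (ha : a ≠ 0) : χ (a ^ 2 * b) = χ b := by
  rw [map_mul, quadraticChar_sq_one' ha, one_mul]

lemma sqrt_count (hodd : Odd p) (c : ZMod p) :
    ∑ v : ZMod p, (if v ^ 2 = c then (1:ℤ) else 0) = quadraticChar (ZMod p) c + 1 := by
  rw [Finset.sum_boole]
  rw [← quadraticChar_card_sqrts (hp2 hodd) c]
  norm_cast
  congr 1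
  rw [Set.toFinset_setOf]

lemma sq_fiber (hodd : Odd p) (g : ZMod p → ℤ) :
    ∑ s : ZMod p, g (s ^ 2) = ∑ z : ZMod p, (quadraticChar (ZMod p) z + 1) * g z := by
  have : ∀ z : ZMod p, (quadraticChar (ZMod p) z + 1) * g z
      = ∑ v : ZMod p, (if v ^ 2 = z then g z else 0) := by
    intro z
    rw [← sqrt_count hodd z, Finset.sum_mul]
    congr 1; ext v; split <;> simp
  simp_rw [this]
  rw [Finset.sum_comm]
  congr 1; ext v
  simp

lemma sum_chi (hodd : Odd p) : ∑ c : ZMod p, χ c = 0 := quadraticChar_sum_zero (hp2 hodd)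

lemma sum_chi_erase (hodd : Odd p) (a : ZMod p) :
    ∑ c ∈ univ.erase a, χ c = - χ a := by
  have h := sum_chi hodd
  rw [← Finset.add_sum_erase _ _ (mem_univ a)] at h
  linarith

lemma sum_u_u1 (hodd : Odd p) : ∑ u : ZMod p, χ (u * (u - 1)) = -1 := by
  have h0 : ∑ u : ZMod p, χ (u * (u - 1)) = ∑ u ∈ univ.erase 0, χ (u * (u - 1)) := by
    rw [← Finset.add_sum_erase _ _ (mem_univ 0)]
    simp
  rw [h0]
  have key : ∑ u ∈ univ.erase 0, χ (u * (u - 1)) = ∑ c ∈ univ.erase 1, χ c := by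
    apply Finset.sum_nbij' (fun u => 1 - u⁻¹) (fun c => (1 - c)⁻¹)
    · intro u hu
      simp only [mem_erase, mem_univ, and_true] at hu ⊢
      intro h
      apply hu
      have : u⁻¹ = 0 := by linear_combination -h
      simpa using this
    · intro c hc
      simp only [mem_erase, mem_univ, and_true] at hc ⊢
      intro h
      apply hc
      have h2 : (1:ZMod p) - c = 0 := inv_eq_zero.mp h
      linear_combination -h2
    · intro u hu
      simp only [mem_erase, mem_univ, and_true] at hu
      field_simp
      ring
    · intro c hc
      simp only [mem_erase, mem_univ, and_true] at hc
      have : (1 : ZMod p) - c ≠ 0 := sub_ne_zero_of_ne (Ne.symm hc)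
      field_simp
      ring
    · intro u hu
      simp only [mem_erase, mem_univ, and_true] at hu
      have : u * (u - 1) = u ^ 2 * (1 - u⁻¹) := by field_simp
      rw [this, chi_sq_mul _ _ hu]
  rw [key, sum_chi_erase hodd]
  simp

lemma L_two (hodd : Odd p) (α β : ZMod p) (h : α ≠ β) :
    ∑ z : ZMod p, χ ((z - α) * (z - β)) = -1 := by
  have hd : β - α ≠ 0 := sub_ne_zero_of_ne (Ne.symm h)
  have hb : Function.Bijective (fun u : ZMod p => α + (β - α) * u) := by
    constructor
    · intro x y hxy
      simp only at hxy
      exact mul_left_cancel₀ hd (by linear_combination hxy)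
    · intro z; exact ⟨(z - α) / (β - α), by field_simp; ring⟩
  rw [← Function.Bijective.sum_comp hb (fun z => χ ((z - α) * (z - β)))]
  have : ∀ u : ZMod p, χ ((α + (β - α) * u - α) * (α + (β - α) * u - β))
      = χ (u * (u - 1)) := by
    intro u
    have e : (α + (β - α) * u - α) * (α + (β - α) * u - β) = (β - α) ^ 2 * (u * (u - 1)) := by
      ring
    rw [e, chi_sq_mul _ _ hd]
  simp_rw [this]
  exact sum_u_u1 hodd

noncomputable def Af (p : ℕ) [Fact p.Prime] (lam : ZMod p) : ℤ :=
  ∑ z : ZMod p, quadraticChar (ZMod p) (z * (z - 1) * (z - lam))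

lemma A_shift (lam : ZMod p) : Af p (1 - lam) = χ (-1) * Af p lam := by
  unfold Af
  rw [Finset.mul_sum]
  have hb : Function.Bijective (fun z : ZMod p => 1 - z) :=
    Function.Involutive.bijective (fun z => by ring)
  rw [← Function.Bijective.sum_comp hb (fun z => χ (z * (z - 1) * (z - (1 - lam))))]
  apply Finset.sum_congr rfl
  intro z _
  rw [← map_mul]
  congr 1
  ring

lemma A_inv (lam : ZMod p) (h : lam ≠ 0) : Af p lam⁻¹ = χ lam * Af p lam := by
  unfold Af
  rw [Finset.mul_sum]
  have hb : Function.Bijective (fun z : ZMod p => lam⁻¹ * z) := by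
    constructor
    · intro x y hxy; exact mul_left_cancel₀ (inv_ne_zero h) hxy
    · intro z; exact ⟨lam * z, by field_simp⟩
  rw [← Function.Bijective.sum_comp hb (fun z => χ (z * (z - 1) * (z - lam⁻¹)))]
  apply Finset.sum_congr rfl
  intro z _
  have e1 : (lam⁻¹ * z) * (lam⁻¹ * z - 1) * (lam⁻¹ * z - lam⁻¹)
      = ((lam⁻¹) ^ 2) ^ 2 * (lam * (z * (z - 1) * (z - lam))) := by
    field_simp
  rw [e1, chi_sq_mul _ _ (pow_ne_zero 2 (inv_ne_zero h)), map_mul]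

lemma sum_chi_sub (hodd : Odd p) (a : ZMod p) : ∑ z : ZMod p, χ (z - a) = 0 := by
  have hb : Function.Bijective (fun z : ZMod p => z + a) := (Equiv.addRight a).bijective
  rw [← Function.Bijective.sum_comp hb (fun z => χ (z - a))]
  simpa using sum_chi hodd

lemma sum_chi_sub' (hodd : Odd p) (a : ZMod p) : ∑ z : ZMod p, χ (a - z) = 0 := by
  have hb : Function.Bijective (fun z : ZMod p => a - z) :=
    Function.Involutive.bijective (fun z => by ring)
  calc ∑ z : ZMod p, χ (a - z) = ∑ z : ZMod p, χ (a - (a - z)) :=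
        (Function.Bijective.sum_comp hb (fun z => χ (a - z))).symm
    _ = ∑ z : ZMod p, χ z := by apply Finset.sum_congr rfl; intro z _; congr 1; ring
    _ = 0 := sum_chi hodd

lemma A_zero (hodd : Odd p) : Af p 0 = - χ (-1) := by
  unfold Af
  have e : ∀ z : ZMod p, χ (z * (z - 1) * (z - 0)) = χ (z ^ 2) * χ (z - 1) := by
    intro z; rw [← map_mul]; congr 1; ring
  simp_rw [e]
  have e1 : ∀ z : ZMod p, χ (z ^ 2) = if z = 0 then 0 else 1 := by
    intro z
    split
    · subst ‹z = 0›; simp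
    · exact quadraticChar_sq_one' ‹z ≠ 0›
  simp_rw [e1]
  have e2 : ∀ x : ZMod p, (if x = 0 then (0:ℤ) else 1) * χ (x - 1)
      = χ (x - 1) - (if x = 0 then χ (x - 1) else 0) := by
    intro x; split <;> ring
  simp_rw [e2]
  rw [Finset.sum_sub_distrib, Finset.sum_ite_eq' univ (0 : ZMod p) (fun x => χ (x - 1)),
    sum_chi_sub hodd]
  simp

lemma A_sum (hodd : Odd p) : ∑ lam : ZMod p, Af p lam = 0 := by
  unfold Af
  rw [Finset.sum_comm]
  have : ∀ z : ZMod p, ∑ lam : ZMod p, χ (z * (z - 1) * (z - lam))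
      = χ (z * (z - 1)) * ∑ lam : ZMod p, χ (z - lam) := by
    intro z
    rw [Finset.mul_sum]
    exact Finset.sum_congr rfl fun lam _ => map_mul χ _ _
  simp_rw [this]
  simp_rw [sum_chi_sub' hodd]
  simp

-- P2a : A(t²) = 1 + D t  for t² ≠ 1
lemma A_sq (hodd : Odd p) (t : ZMod p) (h : t ^ 2 ≠ 1) :
    Af p (t ^ 2) = 1 + ∑ w : ZMod p, χ ((w ^ 2 - 1) * (w ^ 2 - t ^ 2)) := by
  have hf := sq_fiber hodd (fun z => χ ((z - 1) * (z - t ^ 2)))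
  have e : ∀ z : ZMod p, (χ z + 1) * χ ((z - 1) * (z - t ^ 2))
      = χ (z * (z - 1) * (z - t ^ 2)) + χ ((z - 1) * (z - t ^ 2)) := by
    intro z
    simp only [map_mul]; ring
  rw [Finset.sum_congr rfl (fun z _ => e z)] at hf
  rw [Finset.sum_add_distrib] at hf
  rw [L_two hodd 1 (t ^ 2) (fun hh => h hh.symm)] at hf
  unfold Af
  omega

-- P2b
lemma A_invshift (hodd : Odd p) (t : ZMod p) (h : t ^ 2 ≠ 1) :
    Af p (1 - t ^ 2)⁻¹ = χ (t ^ 2 - 1) * Af p (t ^ 2) := by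
  have h0 : (1 : ZMod p) - t ^ 2 ≠ 0 := sub_ne_zero_of_ne (fun hh => h hh.symm)
  rw [A_inv _ h0, A_shift (t ^ 2), ← mul_assoc, ← map_mul]
  congr 2
  ring

-- P1 : Wl = Af 0 + ∑_{t²≠1} Af (1-t²)⁻¹
lemma P1 (hodd : Odd p) :
    ∑ lam : ZMod p, χ (lam * (lam - 1)) * Af p lam
      = Af p 0 + ∑ t ∈ univ.filter (fun t : ZMod p => t ^ 2 ≠ 1), Af p (1 - t ^ 2)⁻¹ := by
  have step1 : ∑ lam : ZMod p, χ (lam * (lam - 1)) * Af p lam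
      = ∑ lam : ZMod p, (χ (lam * (lam - 1)) + 1) * Af p lam := by
    have := A_sum (p := p) hodd
    rw [Finset.sum_congr rfl (fun lam (_ : lam ∈ univ) => by ring :
      ∀ lam ∈ univ, (χ (lam * (lam - 1)) + 1) * Af p lam
        = χ (lam * (lam - 1)) * Af p lam + Af p lam)]
    rw [Finset.sum_add_distrib, this, add_zero]
  rw [step1]
  have step2 : ∀ lam : ZMod p, (χ (lam * (lam - 1)) + 1) * Af p lam
      = ∑ m : ZMod p, (if m ^ 2 = lam * (lam - 1) then Af p lam else 0) := by
    intro lam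
    rw [← sqrt_count hodd (lam * (lam - 1)), Finset.sum_mul]
    congr 1; ext m; split <;> simp
  simp_rw [step2]
  rw [← Finset.sum_product']
  rw [Finset.univ_product_univ, ← Finset.sum_filter]
  -- now sum over conic P
  have h00 : ((0,0) : ZMod p × ZMod p) ∈ univ.filter
      (fun q : ZMod p × ZMod p => q.2 ^ 2 = q.1 * (q.1 - 1)) := by
    simp
  rw [← Finset.add_sum_erase _ _ h00]
  congr 1
  apply Finset.sum_nbij' (fun q : ZMod p × ZMod p => q.2 * q.1⁻¹)
    (fun t : ZMod p => ((1 - t ^ 2)⁻¹, t * (1 - t ^ 2)⁻¹))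
  · -- maps to
    intro q hq
    simp only [mem_erase, mem_filter, mem_univ, true_and] at hq ⊢
    obtain ⟨hne, hconic⟩ := hq
    have h1 : q.1 ≠ 0 := by
      intro h0
      apply hne
      rw [h0] at hconic
      have : q.2 ^ 2 = 0 := by rw [hconic]; ring
      have h2 := pow_eq_zero_iff (n := 2) (by norm_num) |>.mp this
      exact Prod.ext h0 h2
    have key : 1 - (q.2 * q.1⁻¹) ^ 2 = q.1⁻¹ := by
      field_simp
      linear_combination (-1) * hconic
    intro hsq
    apply inv_ne_zero h1
    rw [← key, hsq, sub_self]
  · -- maps from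
    intro t ht
    simp only [mem_filter, mem_univ, true_and, mem_erase] at ht ⊢
    have h0 : (1 : ZMod p) - t ^ 2 ≠ 0 := sub_ne_zero_of_ne (fun hh => ht hh.symm)
    refine ⟨fun hq => ?_, ?_⟩
    · exact (inv_ne_zero h0) (congrArg Prod.fst hq)
    · have e1 : ((1 - t ^ 2)⁻¹ : ZMod p) - 1 = t ^ 2 * (1 - t ^ 2)⁻¹ := by
        field_simp
        ring
      simp only [e1]
      ring
  · -- left inverse
    intro q hq
    simp only [mem_erase, mem_filter, mem_univ, true_and] at hq
    obtain ⟨hne, hconic⟩ := hq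
    have h1 : q.1 ≠ 0 := by
      intro h0
      apply hne
      rw [h0] at hconic
      have : q.2 ^ 2 = 0 := by rw [hconic]; ring
      exact Prod.ext h0 (pow_eq_zero_iff (n := 2) (by norm_num) |>.mp this)
    have key : 1 - (q.2 * q.1⁻¹) ^ 2 = q.1⁻¹ := by
      field_simp
      linear_combination (-1) * hconic
    rw [key, inv_inv]
    ext
    · rfl
    · simp only
      field_simp
  · -- right inverse
    intro t ht
    simp only [mem_filter, mem_univ, true_and] at ht
    have h0 : (1 : ZMod p) - t ^ 2 ≠ 0 := sub_ne_zero_of_ne (fun hh => ht hh.symm)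
    simp only
    rw [inv_inv]
    field_simp
  · -- values
    intro q hq
    simp only [mem_erase, mem_filter, mem_univ, true_and] at hq
    obtain ⟨hne, hconic⟩ := hq
    have h1 : q.1 ≠ 0 := by
      intro h0
      apply hne
      rw [h0] at hconic
      have : q.2 ^ 2 = 0 := by rw [hconic]; ring
      exact Prod.ext h0 (pow_eq_zero_iff (n := 2) (by norm_num) |>.mp this)
    have key : 1 - (q.2 * q.1⁻¹) ^ 2 = q.1⁻¹ := by
      field_simp
      linear_combination (-1) * hconic
    rw [key, inv_inv]

-- P3 : Wl = -χ(-1) - 1 + W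
lemma P3 (hodd : Odd p) :
    ∑ lam : ZMod p, χ (lam * (lam - 1)) * Af p lam
      = - χ (-1) - 1 + ∑ t : ZMod p, ∑ w : ZMod p,
          χ ((t ^ 2 - 1) * ((w ^ 2 - 1) * (w ^ 2 - t ^ 2))) := by
  rw [P1 hodd, A_zero hodd]
  have e1 : ∀ t ∈ univ.filter (fun t : ZMod p => t ^ 2 ≠ 1),
      Af p (1 - t ^ 2)⁻¹ = χ (t ^ 2 - 1)
        * (1 + ∑ w : ZMod p, χ ((w ^ 2 - 1) * (w ^ 2 - t ^ 2))) := by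
    intro t ht
    simp only [mem_filter, mem_univ, true_and] at ht
    rw [A_invshift hodd t ht, A_sq hodd t ht]
  rw [Finset.sum_congr rfl e1]
  have e2 : ∑ t ∈ univ.filter (fun t : ZMod p => t ^ 2 ≠ 1),
      χ (t ^ 2 - 1) * (1 + ∑ w : ZMod p, χ ((w ^ 2 - 1) * (w ^ 2 - t ^ 2)))
      = ∑ t : ZMod p,
      χ (t ^ 2 - 1) * (1 + ∑ w : ZMod p, χ ((w ^ 2 - 1) * (w ^ 2 - t ^ 2))) := by
    apply Finset.sum_filter_of_ne
    intro t _ hne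
    intro h1
    apply hne
    rw [h1, sub_self]
    simp
  rw [e2]
  have e3 : ∀ t : ZMod p,
      χ (t ^ 2 - 1) * (1 + ∑ w : ZMod p, χ ((w ^ 2 - 1) * (w ^ 2 - t ^ 2)))
      = χ (t ^ 2 - 1) + ∑ w : ZMod p, χ ((t ^ 2 - 1) * ((w ^ 2 - 1) * (w ^ 2 - t ^ 2))) := by
    intro t
    rw [mul_add, mul_one, Finset.mul_sum]
    congr 1
    exact Finset.sum_congr rfl fun w _ => (map_mul χ _ _).symm
  rw [Finset.sum_congr rfl fun t _ => e3 t, Finset.sum_add_distrib]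
  have e4 : ∑ t : ZMod p, χ (t ^ 2 - 1) = -1 := by
    have : ∀ t : ZMod p, χ (t ^ 2 - 1) = χ ((t - 1) * (t - (-1))) := by
      intro t; congr 1; ring
    rw [Finset.sum_congr rfl fun t _ => this t]
    exact L_two hodd 1 (-1) (neg_one_ne_one hodd)
  rw [e4]
  ring

-- Möbius helpers
lemma mob1 (hodd : Odd p) (m : ZMod p) (hm : m ≠ 1) : (1 + m) * (1 - m)⁻¹ ≠ -1 := by
  have h0 : (1 : ZMod p) - m ≠ 0 := sub_ne_zero_of_ne (Ne.symm hm)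
  intro h
  have h2 : (1 + m) = -(1 - m) := by
    field_simp at h
    linear_combination h
  apply two_ne hodd
  linear_combination h2
lemma mob2 (hodd : Odd p) (u : ZMod p) (hu : u ≠ -1) : (u - 1) * (u + 1)⁻¹ ≠ 1 := by
  have h0 : (u : ZMod p) + 1 ≠ 0 := fun h => hu (by linear_combination h)
  intro h
  apply two_ne hodd
  field_simp at h
  linear_combination -h
lemma mob3 (hodd : Odd p) (m : ZMod p) (hm : m ≠ 1) :
    ((1 + m) * (1 - m)⁻¹ - 1) * ((1 + m) * (1 - m)⁻¹ + 1)⁻¹ = m := by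
  have h0 : (1 : ZMod p) - m ≠ 0 := sub_ne_zero_of_ne (Ne.symm hm)
  have h2 : (2 : ZMod p) ≠ 0 := two_ne hodd
  have e1 : (1 + m) * (1 - m)⁻¹ - 1 = (2 * m) * (1 - m)⁻¹ := by
    field_simp; ring
  have e2 : (1 + m) * (1 - m)⁻¹ + 1 = 2 * (1 - m)⁻¹ := by
    field_simp
    ring
  rw [e1, e2, mul_inv, inv_inv]
  field_simp
lemma mob4 (hodd : Odd p) (u : ZMod p) (hu : u ≠ -1) :
    (1 + (u - 1) * (u + 1)⁻¹) * (1 - (u - 1) * (u + 1)⁻¹)⁻¹ = u := by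
  have h0 : (u : ZMod p) + 1 ≠ 0 := fun h => hu (by linear_combination h)
  have h2 : (2 : ZMod p) ≠ 0 := two_ne hodd
  have e1 : 1 + (u - 1) * (u + 1)⁻¹ = (2 * u) * (u + 1)⁻¹ := by
    field_simp; ring
  have e2 : 1 - (u - 1) * (u + 1)⁻¹ = 2 * (u + 1)⁻¹ := by
    field_simp
    ring
  rw [e1, e2, mul_inv, inv_inv]
  field_simp

-- P4 : W = V + 1 + χ(-1)
lemma P4 (hodd : Odd p) :
    ∑ t : ZMod p, ∑ w : ZMod p, χ ((t ^ 2 - 1) * ((w ^ 2 - 1) * (w ^ 2 - t ^ 2)))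
      = (∑ u : ZMod p, ∑ v : ZMod p, χ (u * v * (v - u) * (u * v - 1))) + 1 + χ (-1) := by
  -- restrict W to t ≠ 1, w ≠ 1
  have hW1 : ∑ t : ZMod p, ∑ w : ZMod p, χ ((t ^ 2 - 1) * ((w ^ 2 - 1) * (w ^ 2 - t ^ 2)))
      = ∑ q ∈ (univ.erase (1 : ZMod p)) ×ˢ (univ.erase (1 : ZMod p)),
          χ ((q.1 ^ 2 - 1) * ((q.2 ^ 2 - 1) * (q.2 ^ 2 - q.1 ^ 2))) := by
    rw [Finset.sum_product]
    rw [← Finset.add_sum_erase _ (fun t => ∑ w : ZMod p,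
        χ ((t ^ 2 - 1) * ((w ^ 2 - 1) * (w ^ 2 - t ^ 2)))) (mem_univ (1 : ZMod p))]
    have z1 : ∑ w : ZMod p, χ (((1:ZMod p) ^ 2 - 1) * ((w ^ 2 - 1) * (w ^ 2 - 1 ^ 2))) = 0 := by
      apply Finset.sum_eq_zero
      intro w _
      have : ((1:ZMod p) ^ 2 - 1) * ((w ^ 2 - 1) * (w ^ 2 - 1 ^ 2)) = 0 := by ring
      rw [this]; simp
    rw [z1, zero_add]
    apply Finset.sum_congr rfl
    intro t _
    rw [← Finset.add_sum_erase _ (fun w => χ ((t ^ 2 - 1) * ((w ^ 2 - 1) * (w ^ 2 - t ^ 2))))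
      (mem_univ (1 : ZMod p))]
    have z2 : χ ((t ^ 2 - 1) * (((1:ZMod p) ^ 2 - 1) * (1 ^ 2 - t ^ 2))) = 0 := by
      have : (t ^ 2 - 1) * (((1:ZMod p) ^ 2 - 1) * (1 ^ 2 - t ^ 2)) = 0 := by ring
      rw [this]; simp
    rw [z2, zero_add]
  rw [hW1]
  -- Möbius bijection
  have hbij : ∑ q ∈ (univ.erase (1 : ZMod p)) ×ˢ (univ.erase (1 : ZMod p)),
      χ ((q.1 ^ 2 - 1) * ((q.2 ^ 2 - 1) * (q.2 ^ 2 - q.1 ^ 2)))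
      = ∑ r ∈ (univ.erase (-1 : ZMod p)) ×ˢ (univ.erase (-1 : ZMod p)),
          χ (r.1 * r.2 * (r.2 - r.1) * (r.1 * r.2 - 1)) := by
    apply Finset.sum_nbij'
      (fun q : ZMod p × ZMod p => ((1 + q.1) * (1 - q.1)⁻¹, (1 + q.2) * (1 - q.2)⁻¹))
      (fun r : ZMod p × ZMod p => ((r.1 - 1) * (r.1 + 1)⁻¹, (r.2 - 1) * (r.2 + 1)⁻¹))
    · intro q hq
      rw [Finset.mem_product] at hq ⊢
      simp only [mem_erase, mem_univ, and_true] at hq ⊢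
      exact ⟨mob1 hodd _ hq.1, mob1 hodd _ hq.2⟩
    · intro r hr
      rw [Finset.mem_product] at hr ⊢
      simp only [mem_erase, mem_univ, and_true] at hr ⊢
      exact ⟨mob2 hodd _ hr.1, mob2 hodd _ hr.2⟩
    · intro q hq
      rw [Finset.mem_product] at hq
      simp only [mem_erase, mem_univ, and_true] at hq
      ext
      · exact mob3 hodd _ hq.1
      · exact mob3 hodd _ hq.2
    · intro r hr
      rw [Finset.mem_product] at hr
      simp only [mem_erase, mem_univ, and_true] at hr
      ext
      · exact mob4 hodd _ hr.1
      · exact mob4 hodd _ hr.2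
    · intro q hq
      rw [Finset.mem_product] at hq
      simp only [mem_erase, mem_univ, and_true] at hq
      obtain ⟨hm, hw⟩ := hq
      have hm0 : (1 : ZMod p) - q.1 ≠ 0 := sub_ne_zero_of_ne (Ne.symm hm)
      have hw0 : (1 : ZMod p) - q.2 ≠ 0 := sub_ne_zero_of_ne (Ne.symm hw)
      have hD : (1 - q.1) * (1 - q.2) ≠ 0 := mul_ne_zero hm0 hw0
      set u := (1 + q.1) * (1 - q.1)⁻¹ with hu
      set v := (1 + q.2) * (1 - q.2)⁻¹ with hv
      have key : (2:ZMod p) ^ 2 * ((q.1 ^ 2 - 1) * ((q.2 ^ 2 - 1) * (q.2 ^ 2 - q.1 ^ 2)))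
          = (((1 - q.1) * (1 - q.2)) ^ 2) ^ 2 * (u * v * (v - u) * (u * v - 1)) := by
        rw [hu, hv]
        field_simp
        ring
      calc χ ((q.1 ^ 2 - 1) * ((q.2 ^ 2 - 1) * (q.2 ^ 2 - q.1 ^ 2)))
          = χ ((2:ZMod p) ^ 2 * ((q.1 ^ 2 - 1) * ((q.2 ^ 2 - 1) * (q.2 ^ 2 - q.1 ^ 2)))) :=
            (chi_sq_mul _ _ (two_ne hodd)).symm
        _ = χ ((((1 - q.1) * (1 - q.2)) ^ 2) ^ 2 * (u * v * (v - u) * (u * v - 1))) := by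
            rw [key]
        _ = χ (u * v * (v - u) * (u * v - 1)) :=
            chi_sq_mul _ _ (pow_ne_zero 2 hD)
  rw [hbij]
  -- now complete the square set to the full sum
  rw [Finset.sum_product]
  have hVrow : ∀ u : ZMod p, u ≠ -1 →
      ∑ v ∈ univ.erase (-1 : ZMod p), χ (u * v * (v - u) * (u * v - 1))
        = (∑ v : ZMod p, χ (u * v * (v - u) * (u * v - 1))) - χ (-u) := by
    intro u hu
    rw [← Finset.add_sum_erase _ (fun v => χ (u * v * (v - u) * (u * v - 1)))
      (mem_univ (-1 : ZMod p))]
    have : χ (u * (-1) * ((-1) - u) * (u * (-1) - 1)) = χ ((u + 1) ^ 2 * (-u)) := by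
      congr 1; ring
    rw [this, chi_sq_mul _ _ (fun h => hu (by linear_combination h))]
    ring
  rw [Finset.sum_congr rfl (fun u hu => hVrow u (by
    simp only [mem_erase, mem_univ, and_true] at hu; exact hu))]
  rw [Finset.sum_sub_distrib]
  -- ∑_{u ≠ -1} χ(-u) = -1
  have hsum1 : ∑ u ∈ univ.erase (-1 : ZMod p), χ (-u) = -1 := by
    have hb : Function.Bijective (fun u : ZMod p => -u) :=
      Function.Involutive.bijective (fun z => by ring)
    have : ∑ u : ZMod p, χ (-u) = 0 := by
      rw [Function.Bijective.sum_comp hb (fun c => χ c)]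
      exact sum_chi hodd
    rw [← Finset.add_sum_erase _ (fun u => χ (-u)) (mem_univ (-1 : ZMod p))] at this
    simp only [neg_neg] at this
    have h1 : χ (1 : ZMod p) = 1 := map_one χ
    linarith [this]
  rw [hsum1]
  -- outer: add back u = -1 row
  have houter : ∑ u ∈ univ.erase (-1 : ZMod p),
      (∑ v : ZMod p, χ (u * v * (v - u) * (u * v - 1)))
      = (∑ u : ZMod p, ∑ v : ZMod p, χ (u * v * (v - u) * (u * v - 1))) - (- χ (-1)) := by
    rw [← Finset.add_sum_erase _ (fun u => ∑ v : ZMod p, χ (u * v * (v - u) * (u * v - 1)))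
      (mem_univ (-1 : ZMod p))]
    have hrow : ∑ v : ZMod p, χ ((-1 : ZMod p) * v * (v - (-1)) * ((-1) * v - 1)) = - χ (-1) := by
      have e : ∀ v : ZMod p, χ ((-1 : ZMod p) * v * (v - (-1)) * ((-1) * v - 1))
          = χ ((v + 1) ^ 2 * v) := by
        intro v; congr 1; ring
      rw [Finset.sum_congr rfl fun v _ => e v]
      have e2 : ∀ v : ZMod p, χ ((v + 1) ^ 2 * v) = χ (v + 1) ^ 2 * χ v := by
        intro v; rw [map_mul, map_pow]
      rw [Finset.sum_congr rfl fun v _ => e2 v]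
      -- ∑ χ(v+1)²χ(v) = ∑_{v≠-1} χ v
      have e3 : ∀ v : ZMod p, χ (v + 1) ^ 2 * χ v
          = χ v - (if v = -1 then χ v else 0) := by
        intro v
        by_cases hv : v = -1
        · subst hv; simp
        · have : v + 1 ≠ 0 := fun h => hv (by linear_combination h)
          rw [quadraticChar_sq_one this]
          simp [hv]
      rw [Finset.sum_congr rfl fun v _ => e3 v, Finset.sum_sub_distrib,
        Finset.sum_ite_eq' univ (-1 : ZMod p) (fun v => χ v), sum_chi hodd]
      simp
    rw [hrow]
    ring
  rw [houter]
  ring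

-- P5 : V = T
lemma P5 (hodd : Odd p) :
    ∑ u : ZMod p, ∑ v : ZMod p, χ (u * v * (v - u) * (u * v - 1))
      = ∑ u : ZMod p, ∑ w : ZMod p, χ (u * (w * (w - 1) * (u ^ 2 * w - 1))) := by
  apply Finset.sum_congr rfl
  intro u _
  by_cases hu : u = 0
  · subst hu
    apply Finset.sum_congr rfl
    intro v _
    rw [show (0 : ZMod p) * v * (v - 0) * (0 * v - 1) = 0 by ring,
      show (0 : ZMod p) * (v * (v - 1) * (0 ^ 2 * v - 1)) = 0 by ring]
  · have hb : Function.Bijective (fun w : ZMod p => u * w) := by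
      constructor
      · intro x y hxy; exact mul_left_cancel₀ hu hxy
      · intro z; exact ⟨u⁻¹ * z, by field_simp⟩
    rw [← Function.Bijective.sum_comp hb (fun v => χ (u * v * (v - u) * (u * v - 1)))]
    apply Finset.sum_congr rfl
    intro w _
    have e : u * (u * w) * (u * w - u) * (u * (u * w) - 1)
        = u ^ 2 * (u * (w * (w - 1) * (u ^ 2 * w - 1))) := by ring
    rw [e, chi_sq_mul _ _ hu]

-- P6 : a² = p + χ(-1) p + T
lemma P6 (hodd : Odd p) :
    Af p (-1) ^ 2 = (p : ℤ) + χ (-1) * p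
      + ∑ u : ZMod p, ∑ w : ZMod p, χ (u * (w * (w - 1) * (u ^ 2 * w - 1))) := by
  have hA : Af p (-1) = ∑ s : ZMod p, χ (s * (s - 1) * (s + 1)) := by
    unfold Af
    exact Finset.sum_congr rfl fun z _ => by norm_num
  have hsq : Af p (-1) ^ 2 = ∑ s : ZMod p, ∑ t : ZMod p,
      χ ((s * (s - 1) * (s + 1)) * (t * (t - 1) * (t + 1))) := by
    rw [hA, sq, Finset.sum_mul_sum]
    exact Finset.sum_congr rfl fun s _ => Finset.sum_congr rfl fun t _ => (map_mul χ _ _).symm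
  rw [hsq]
  -- row substitution t = s m
  have hrow : ∀ s : ZMod p,
      ∑ t : ZMod p, χ ((s * (s - 1) * (s + 1)) * (t * (t - 1) * (t + 1)))
        = ∑ m : ZMod p, χ (m * ((s ^ 2 - 1) * (s ^ 2 * m ^ 2 - 1))) := by
    intro s
    by_cases hs : s = 0
    · subst hs
      have l : ∀ t : ZMod p, χ ((0 : ZMod p) * (0 - 1) * (0 + 1) * (t * (t - 1) * (t + 1))) = 0 := by
        intro t
        rw [show (0 : ZMod p) * (0 - 1) * (0 + 1) * (t * (t - 1) * (t + 1)) = 0 by ring]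
        simp
      rw [Finset.sum_congr rfl fun t _ => l t]
      have r : ∀ m : ZMod p, χ (m * (((0:ZMod p) ^ 2 - 1) * (0 ^ 2 * m ^ 2 - 1))) = χ m := by
        intro m; congr 1; ring
      rw [Finset.sum_congr rfl fun m _ => r m, sum_chi hodd, Finset.sum_const]
      simp
    · have hb : Function.Bijective (fun m : ZMod p => s * m) := by
        constructor
        · intro x y hxy; exact mul_left_cancel₀ hs hxy
        · intro z; exact ⟨s⁻¹ * z, by field_simp⟩
      rw [← Function.Bijective.sum_comp hb
        (fun t => χ ((s * (s - 1) * (s + 1)) * (t * (t - 1) * (t + 1))))]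
      apply Finset.sum_congr rfl
      intro m _
      have e : (s * (s - 1) * (s + 1)) * ((s * m) * (s * m - 1) * (s * m + 1))
          = s ^ 2 * (m * ((s ^ 2 - 1) * (s ^ 2 * m ^ 2 - 1))) := by ring
      rw [e, chi_sq_mul _ _ hs]
  rw [Finset.sum_congr rfl fun s _ => hrow s]
  rw [Finset.sum_comm]
  -- fiber over z = s²
  have hfib : ∀ m : ZMod p,
      ∑ s : ZMod p, χ (m * ((s ^ 2 - 1) * (s ^ 2 * m ^ 2 - 1)))
        = ∑ z : ZMod p, χ (m * ((z - 1) * (z * m ^ 2 - 1)))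
          + ∑ z : ZMod p, χ (m * (z * ((z - 1) * (z * m ^ 2 - 1)))) := by
    intro m
    have := sq_fiber hodd (fun z => χ (m * ((z - 1) * (z * m ^ 2 - 1))))
    rw [this]
    rw [← Finset.sum_add_distrib]
    apply Finset.sum_congr rfl
    intro z _
    have e : χ (m * (z * ((z - 1) * (z * m ^ 2 - 1))))
        = χ z * χ (m * ((z - 1) * (z * m ^ 2 - 1))) := by
      rw [show m * (z * ((z - 1) * (z * m ^ 2 - 1)))
        = z * (m * ((z - 1) * (z * m ^ 2 - 1))) by ring, map_mul]
    rw [e]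
    ring
  rw [Finset.sum_congr rfl fun m _ => hfib m, Finset.sum_add_distrib]
  -- second part is T (after swapping to match)
  have hTeq : ∑ m : ZMod p, ∑ z : ZMod p, χ (m * (z * ((z - 1) * (z * m ^ 2 - 1))))
      = ∑ u : ZMod p, ∑ w : ZMod p, χ (u * (w * (w - 1) * (u ^ 2 * w - 1))) := by
    apply Finset.sum_congr rfl
    intro m _
    apply Finset.sum_congr rfl
    intro z _
    congr 1
    ring
  rw [hTeq]
  -- first part = p + χ(-1) p
  have hsq1 : ∑ z : ZMod p, χ ((z - 1) ^ 2) = (p : ℤ) - 1 := by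
    have e2 : ∀ z : ZMod p, χ ((z - 1) ^ 2) = 1 - (if z = 1 then (1:ℤ) else 0) := by
      intro z
      by_cases hz : z = 1
      · subst hz; simp
      · rw [quadraticChar_sq_one' (sub_ne_zero_of_ne hz)]; simp [hz]
    rw [Finset.sum_congr rfl fun z _ => e2 z, Finset.sum_sub_distrib,
      Finset.sum_ite_eq' univ (1 : ZMod p) (fun _ => (1:ℤ)), Finset.sum_const,
      Finset.card_univ, ZMod.card]
    simp
  have hK : ∑ m : ZMod p, ∑ z : ZMod p, χ (m * ((z - 1) * (z * m ^ 2 - 1)))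
      = (p : ℤ) + χ (-1) * p := by
    set K : ZMod p → ℤ := fun m => ∑ z : ZMod p, χ (m * ((z - 1) * (z * m ^ 2 - 1))) with hKdef
    have hK1 : K 1 = (p : ℤ) - 1 := by
      rw [hKdef]
      simp only
      rw [← hsq1]
      apply Finset.sum_congr rfl
      intro z _
      congr 1
      ring
    have hKneg1 : K (-1) = χ (-1) * ((p : ℤ) - 1) := by
      rw [hKdef]
      simp only
      rw [← hsq1, Finset.mul_sum]
      apply Finset.sum_congr rfl
      intro z _
      rw [← map_mul]
      congr 1
      ring
    have hKgen : ∀ m : ZMod p, m ≠ 1 → m ≠ -1 → K m = - χ m := by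
      intro m h1 hneg
      by_cases hm : m = 0
      · subst hm
        rw [hKdef]
        simp only
        have : ∀ z : ZMod p, χ ((0:ZMod p) * ((z - 1) * (z * 0 ^ 2 - 1))) = 0 := by
          intro z; rw [zero_mul]; simp
        rw [Finset.sum_congr rfl fun z _ => this z]
        simp
      · have hm2 : m ^ 2 ≠ 1 := by
          intro h
          have : (m - 1) * (m + 1) = 0 := by linear_combination h
          rcases mul_eq_zero.mp this with h' | h'
          · exact h1 (by linear_combination h')
          · exact hneg (by linear_combination h')
        have hm2' : (1 : ZMod p) ≠ (m ^ 2)⁻¹ := fun h => hm2 (inv_eq_one.mp h.symm)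
        rw [hKdef]
        simp only
        have e : ∀ z : ZMod p, χ (m * ((z - 1) * (z * m ^ 2 - 1)))
            = χ m * χ ((z - 1) * (z - (m ^ 2)⁻¹)) := by
          intro z
          rw [show m * ((z - 1) * (z * m ^ 2 - 1))
            = m * ((m ^ 2) * ((z - 1) * (z - (m ^ 2)⁻¹))) by field_simp]
          rw [map_mul, map_mul, quadraticChar_sq_one' hm]
          ring
        rw [Finset.sum_congr rfl fun z _ => e z, ← Finset.mul_sum,
          L_two hodd 1 (m ^ 2)⁻¹ hm2']
        ring
    have hne : (-1 : ZMod p) ∈ univ.erase (1 : ZMod p) := by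
      simp only [mem_erase, mem_univ, and_true]
      exact fun h => (neg_one_ne_one hodd) h.symm
    have split1 : ∑ m : ZMod p, K m
        = K 1 + (K (-1) + ∑ m ∈ (univ.erase (1:ZMod p)).erase (-1 : ZMod p), K m) := by
      rw [← Finset.add_sum_erase _ K (mem_univ (1 : ZMod p)), ← Finset.add_sum_erase _ K hne]
    have hrest : ∑ m ∈ (univ.erase (1:ZMod p)).erase (-1 : ZMod p), K m
        = ∑ m ∈ (univ.erase (1:ZMod p)).erase (-1 : ZMod p), (- χ m) := by
      apply Finset.sum_congr rfl
      intro m hm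
      simp only [mem_erase, mem_univ, and_true] at hm
      exact hKgen m hm.2 hm.1
    have hchirest : ∑ m ∈ (univ.erase (1:ZMod p)).erase (-1 : ZMod p), χ m
        = - 1 - χ (-1) := by
      have h0 := sum_chi hodd
      rw [← Finset.add_sum_erase _ _ (mem_univ (1 : ZMod p)),
        ← Finset.add_sum_erase _ _ hne] at h0
      have h1 : χ (1 : ZMod p) = 1 := map_one χ
      rw [h1] at h0
      linarith
    rw [split1, hrest, Finset.sum_neg_distrib, hchirest, hK1, hKneg1]
    ring
  rw [hK]

-- P7 : parity
lemma P7 (hodd : Odd p) : χ (-1) * Af p (-1) = Af p (-1) := by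
  have hb : Function.Bijective (fun z : ZMod p => -z) :=
    Function.Involutive.bijective (fun z => by ring)
  calc χ (-1) * Af p (-1)
      = ∑ z : ZMod p, χ (-1) * χ (z * (z - 1) * (z - (-1))) := by
        unfold Af; rw [Finset.mul_sum]
    _ = ∑ z : ZMod p, χ ((-z) * ((-z) - 1) * ((-z) - (-1))) := by
        apply Finset.sum_congr rfl
        intro z _
        rw [← map_mul]
        congr 1
        ring
    _ = ∑ z : ZMod p, χ (z * (z - 1) * (z - (-1))) :=
        Function.Bijective.sum_comp hb (fun z => χ (z * (z - 1) * (z - (-1))))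
    _ = Af p (-1) := rfl

-- C3 : S2 = χ(-1) * Wl
lemma C3 (hodd : Odd p) :
    ∑ x : ZMod p, ∑ y : ZMod p, χ (x * y * (y - x) * (y + 1) * (x + 1))
      = χ (-1) * ∑ lam : ZMod p, χ (lam * (lam - 1)) * Af p lam := by
  have hb : Function.Bijective (fun z : ZMod p => -z) :=
    Function.Involutive.bijective (fun z => by ring)
  have step : ∀ x : ZMod p, ∑ y : ZMod p, χ (x * y * (y - x) * (y + 1) * (x + 1))
      = ∑ y : ZMod p, χ (x * (-y) * ((-y) - x) * ((-y) + 1) * (x + 1)) :=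
    fun x => (Function.Bijective.sum_comp hb
      (fun y => χ (x * y * (y - x) * (y + 1) * (x + 1)))).symm
  rw [Finset.sum_congr rfl fun x _ => step x]
  have step2 : ∑ x : ZMod p, ∑ y : ZMod p, χ (x * (-y) * ((-y) - x) * ((-y) + 1) * (x + 1))
      = ∑ x : ZMod p, ∑ y : ZMod p,
          χ ((-x) * (-y) * ((-y) - (-x)) * ((-y) + 1) * ((-x) + 1)) :=
    (Function.Bijective.sum_comp hb (fun x => ∑ y : ZMod p,
      χ (x * (-y) * ((-y) - x) * ((-y) + 1) * (x + 1)))).symm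
  rw [step2]
  rw [Finset.mul_sum]
  apply Finset.sum_congr rfl
  intro lam _
  unfold Af
  rw [Finset.mul_sum, Finset.mul_sum]
  apply Finset.sum_congr rfl
  intro z _
  rw [← map_mul, ← map_mul]
  congr 1
  ring

-- Wl = T
lemma WlT (hodd : Odd p) :
    ∑ lam : ZMod p, χ (lam * (lam - 1)) * Af p lam
      = ∑ u : ZMod p, ∑ w : ZMod p, χ (u * (w * (w - 1) * (u ^ 2 * w - 1))) := by
  rw [P3 hodd, P4 hodd, P5 hodd]
  ring

lemma count_E (hodd : Odd p) :
    (Nat.card {xy : ZMod p × ZMod p // xy.2 ^ 2 = xy.1 ^ 3 - xy.1} : ℤ)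
      = (p : ℤ) + Af p (-1) := by
  rw [Nat.card_eq_fintype_card, Fintype.card_subtype]
  rw [Finset.card_filter]
  push_cast
  rw [Fintype.sum_prod_type]
  have hrow : ∀ x : ZMod p,
      ∑ y : ZMod p, (if y ^ 2 = x ^ 3 - x then (1:ℤ) else 0)
        = χ (x ^ 3 - x) + 1 := fun x => sqrt_count hodd _
  rw [Finset.sum_congr rfl fun x _ => hrow x, Finset.sum_add_distrib]
  have h1 : ∑ x : ZMod p, χ (x ^ 3 - x) = Af p (-1) := by
    unfold Af
    apply Finset.sum_congr rfl
    intro z _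
    congr 1
    ring
  rw [h1, Finset.sum_const, Finset.card_univ, ZMod.card]
  push_cast
  ring

lemma count_K (hodd : Odd p) :
    (Nat.card {v : ZMod p × ZMod p × ZMod p × ZMod p //
        (v.2.1, v.2.2.1, v.2.2.2) ≠ (0, 0, 0) ∧
        v.1 ^ 2 = v.2.1 * v.2.2.1 * v.2.2.2 * (-v.2.1 + v.2.2.1) *
          (v.2.2.1 + v.2.2.2) * (v.2.1 + v.2.2.2)} : ℤ)
      = ((p : ℤ) ^ 3 - 1)
        + ∑ z : ZMod p × ZMod p × ZMod p,
            χ (z.1 * z.2.1 * z.2.2 * (-z.1 + z.2.1) * (z.2.1 + z.2.2) * (z.1 + z.2.2)) := by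
  rw [Nat.card_eq_fintype_card, Fintype.card_subtype]
  rw [Finset.card_filter]
  push_cast
  rw [Fintype.sum_prod_type]
  rw [Finset.sum_comm]
  have hrow : ∀ z : ZMod p × ZMod p × ZMod p,
      ∑ v : ZMod p, (if ((v, z).2.1, (v, z).2.2.1, (v, z).2.2.2) ≠ ((0:ZMod p), (0:ZMod p), (0:ZMod p)) ∧
          (v, z).1 ^ 2 = (v, z).2.1 * (v, z).2.2.1 * (v, z).2.2.2 * (-(v, z).2.1 + (v, z).2.2.1) *
            ((v, z).2.2.1 + (v, z).2.2.2) * ((v, z).2.1 + (v, z).2.2.2) then (1:ℤ) else 0)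
        = if z = (0, 0, 0) then 0
            else χ (z.1 * z.2.1 * z.2.2 * (-z.1 + z.2.1) * (z.2.1 + z.2.2) * (z.1 + z.2.2)) + 1 := by
    intro z
    by_cases hz : z = (0, 0, 0)
    · subst hz
      simp
    · have hz' : ((z.1, z.2.1, z.2.2) : ZMod p × ZMod p × ZMod p) ≠ (0, 0, 0) := hz
      simp only [hz', ne_eq, not_false_eq_true, true_and, if_neg hz]
      exact sqrt_count hodd _
  rw [Finset.sum_congr rfl fun z _ => hrow z]
  have split : ∀ z : ZMod p × ZMod p × ZMod p,
      (if z = ((0:ZMod p), (0:ZMod p), (0:ZMod p)) then (0:ℤ)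
        else χ (z.1 * z.2.1 * z.2.2 * (-z.1 + z.2.1) * (z.2.1 + z.2.2) * (z.1 + z.2.2)) + 1)
      = χ (z.1 * z.2.1 * z.2.2 * (-z.1 + z.2.1) * (z.2.1 + z.2.2) * (z.1 + z.2.2))
        + (1 - if z = (0, 0, 0) then 1 else 0) := by
    intro z
    by_cases hz : z = (0, 0, 0)
    · subst hz
      simp only [if_pos rfl]
      have : ((0:ZMod p) * 0 * 0 * (-0 + 0) * (0 + 0) * (0 + 0)) = 0 := by ring
      rw [this]
      simp
    · simp only [if_neg hz]
      ring
  rw [Finset.sum_congr rfl fun z _ => split z, Finset.sum_add_distrib, Finset.sum_sub_distrib]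
  rw [Finset.sum_ite_eq' univ ((0,0,0) : ZMod p × ZMod p × ZMod p) (fun _ => (1:ℤ))]
  rw [Finset.sum_const, Finset.card_univ]
  have hcard : (Fintype.card (ZMod p × ZMod p × ZMod p) : ℤ) = (p : ℤ) ^ 3 := by
    simp [ZMod.card]
    push_cast
    ring
  rw [nsmul_eq_mul, hcard]
  simp only [Finset.mem_univ, if_pos]
  ring

lemma chart (hodd : Odd p) :
    ∑ z : ZMod p × ZMod p × ZMod p,
        χ (z.1 * z.2.1 * z.2.2 * (-z.1 + z.2.1) * (z.2.1 + z.2.2) * (z.1 + z.2.2))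
      = ((p : ℤ) - 1) * ∑ x : ZMod p, ∑ y : ZMod p, χ (x * y * (y - x) * (y + 1) * (x + 1)) := by
  rw [Fintype.sum_prod_type]
  have inner : ∀ x : ZMod p, ∑ yz : ZMod p × ZMod p,
      χ (x * yz.1 * yz.2 * (-x + yz.1) * (yz.1 + yz.2) * (x + yz.2))
      = ∑ y : ZMod p, ∑ t : ZMod p, χ (x * y * t * (-x + y) * (y + t) * (x + t)) := by
    intro x
    rw [Fintype.sum_prod_type]
  rw [Finset.sum_congr rfl fun x _ => inner x]
  -- reorder: t outermost
  rw [Finset.sum_comm]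
  have inner2 : ∀ y : ZMod p, ∑ x : ZMod p, ∑ t : ZMod p,
      χ (x * y * t * (-x + y) * (y + t) * (x + t))
      = ∑ t : ZMod p, ∑ x : ZMod p, χ (x * y * t * (-x + y) * (y + t) * (x + t)) :=
    fun y => Finset.sum_comm
  rw [Finset.sum_congr rfl fun y _ => inner2 y, Finset.sum_comm]
  -- now outermost variable is t
  have hrow : ∀ t : ZMod p,
      ∑ y : ZMod p, ∑ x : ZMod p, χ (x * y * t * (-x + y) * (y + t) * (x + t))
      = if t = 0 then 0
          else ∑ x : ZMod p, ∑ y : ZMod p, χ (x * y * (y - x) * (y + 1) * (x + 1)) := by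
    intro t
    by_cases ht : t = 0
    · subst ht
      simp only [if_pos rfl]
      apply Finset.sum_eq_zero
      intro y _
      apply Finset.sum_eq_zero
      intro x _
      rw [show x * y * (0:ZMod p) * (-x + y) * (y + 0) * (x + 0) = 0 by ring]
      simp
    · rw [if_neg ht, Finset.sum_comm]
      have hb : Function.Bijective (fun w : ZMod p => t * w) := by
        constructor
        · intro a b hab; exact mul_left_cancel₀ ht hab
        · intro c; exact ⟨t⁻¹ * c, by field_simp⟩
      have outer : ∑ x : ZMod p, (∑ y : ZMod p, χ (x * y * t * (-x + y) * (y + t) * (x + t)))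
          = ∑ x : ZMod p, (∑ y : ZMod p,
              χ ((t * x) * y * t * (-(t * x) + y) * (y + t) * ((t * x) + t))) :=
        (Function.Bijective.sum_comp hb
          (fun x => ∑ y : ZMod p, χ (x * y * t * (-x + y) * (y + t) * (x + t)))).symm
      rw [outer]
      apply Finset.sum_congr rfl
      intro x _
      have inner3 : ∑ y : ZMod p, χ ((t * x) * y * t * (-(t * x) + y) * (y + t) * ((t * x) + t))
          = ∑ y : ZMod p, χ ((t * x) * (t * y) * t * (-(t * x) + (t * y)) * ((t * y) + t)
              * ((t * x) + t)) :=
        (Function.Bijective.sum_comp hb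
          (fun y => χ ((t * x) * y * t * (-(t * x) + y) * (y + t) * ((t * x) + t)))).symm
      rw [inner3]
      apply Finset.sum_congr rfl
      intro y _
      have e : (t * x) * (t * y) * t * (-(t * x) + (t * y)) * ((t * y) + t) * ((t * x) + t)
          = (t ^ 3) ^ 2 * (x * y * (y - x) * (y + 1) * (x + 1)) := by ring
      rw [e, chi_sq_mul _ _ (pow_ne_zero 3 ht)]
  rw [Finset.sum_congr rfl fun t _ => hrow t]
  have e : ∀ t : ZMod p, (if t = 0 then (0:ℤ)
      else ∑ x : ZMod p, ∑ y : ZMod p, χ (x * y * (y - x) * (y + 1) * (x + 1)))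
      = (∑ x : ZMod p, ∑ y : ZMod p, χ (x * y * (y - x) * (y + 1) * (x + 1)))
        - (if t = 0 then (∑ x : ZMod p, ∑ y : ZMod p,
            χ (x * y * (y - x) * (y + 1) * (x + 1))) else 0) := by
    intro t; split <;> ring
  rw [Finset.sum_congr rfl fun t _ => e t, Finset.sum_sub_distrib,
    Finset.sum_ite_eq' univ (0 : ZMod p), Finset.sum_const, Finset.card_univ, ZMod.card,
    nsmul_eq_mul]
  simp only [Finset.mem_univ, if_pos]
  ring

end Statement5Aux

/-- first part of Proposition 3.14 of the paper.
Let `p` be an odd prime, `φ` the quadratic character of `F_p`, and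
`a = p − #{(x,y) : y² = x³ − x}` the trace of Frobenius of the elliptic curve of
conductor 32.  Then the number of `(v,z₀,z₁,z₂) ∈ F_p⁴` with `(z₀,z₁,z₂) ≠ (0,0,0)` and
`v² = z₀·z₁·z₂·(−z₀+z₁)·(z₁+z₂)·(z₀+z₂)` equals `(p−1)·(p² − φ(−1)·p + 1 + a²)`. -/
theorem statement5 (p : ℕ) [Fact p.Prime] (hodd : Odd p)
    (a : ℤ)
    (ha : a = p - Nat.card {xy : ZMod p × ZMod p // xy.2 ^ 2 = xy.1 ^ 3 - xy.1}) :
    (Nat.card {v : ZMod p × ZMod p × ZMod p × ZMod p //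
        (v.2.1, v.2.2.1, v.2.2.2) ≠ (0, 0, 0) ∧
        v.1 ^ 2 = v.2.1 * v.2.2.1 * v.2.2.2 * (-v.2.1 + v.2.2.1) *
          (v.2.2.1 + v.2.2.2) * (v.2.1 + v.2.2.2)} : ℤ) =
      (p - 1) * (p ^ 2 - quadraticChar (ZMod p) (-1) * p + 1 + a ^ 2) := by
  have haA : a = - Statement5Aux.Af p (-1) := by
    rw [ha, Statement5Aux.count_E hodd]
    ring
  rw [Statement5Aux.count_K hodd, Statement5Aux.chart hodd, Statement5Aux.C3 hodd, Statement5Aux.WlT hodd]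
  have hT : ∑ u : ZMod p, ∑ w : ZMod p,
      quadraticChar (ZMod p) (u * (w * (w - 1) * (u ^ 2 * w - 1)))
      = Statement5Aux.Af p (-1) ^ 2 - (p : ℤ) - quadraticChar (ZMod p) (-1) * p := by
    rw [Statement5Aux.P6 hodd]
    ring
  rw [hT]
  have h1 : quadraticChar (ZMod p) (-1 : ZMod p) * Statement5Aux.Af p (-1) ^ 2 = Statement5Aux.Af p (-1) ^ 2 := by
    rw [sq, ← mul_assoc, Statement5Aux.P7 hodd]
  have h2 : quadraticChar (ZMod p) (-1 : ZMod p) * quadraticChar (ZMod p) (-1 : ZMod p) = 1 := by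
    have : (-1 : ZMod p) ≠ 0 := by
      intro h
      exact one_ne_zero (by linear_combination -h : (1 : ZMod p) = 0)
    rw [← sq, quadraticChar_sq_one this]
  have ha2 : a ^ 2 = Statement5Aux.Af p (-1) ^ 2 := by rw [haA]; ring
  rw [ha2]
  linear_combination ((p:ℤ) - 1) * h1 - ((p:ℤ) - 1) * (p:ℤ) * h2
end

section
/- Let p be an odd prime and λ ∈ F_p with λ ≠ 0 and λ ≠ -1. Let M = p − #{(x,y) ∈ F_p^2 : y^2 = (x−1)·(x^2 − (λ+1)^{-1})}. Then M^2 = a_{λ,p}^2. -/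
open Finset

private lemma count_curve (p : ℕ) [Fact p.Prime] (hodd : Odd p) (f : ZMod p → ZMod p) :
    (Nat.card {xy : ZMod p × ZMod p // xy.2 ^ 2 = f xy.1} : ℤ)
      = p + ∑ x : ZMod p, quadraticChar (ZMod p) (f x) := by
  have hchar : ringChar (ZMod p) ≠ 2 := by
    rw [ZMod.ringChar_zmod_n]
    intro h; subst h; exact absurd hodd (by decide)
  have key : ∀ x : ZMod p,
      ((Finset.univ.filter fun y : ZMod p => y ^ 2 = f x).card : ℤ)
        = quadraticChar (ZMod p) (f x) + 1 := by
    intro x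
    have h := quadraticChar_card_sqrts hchar (f x)
    rw [show {y : ZMod p | y ^ 2 = f x}.toFinset
        = Finset.univ.filter fun y : ZMod p => y ^ 2 = f x by
      ext y; simp] at h
    exact h
  have : Nat.card {xy : ZMod p × ZMod p // xy.2 ^ 2 = f xy.1}
      = ∑ x : ZMod p, (Finset.univ.filter fun y : ZMod p => y ^ 2 = f x).card := by
    rw [Nat.card_eq_fintype_card,
      Fintype.card_congr (Equiv.subtypeProdEquivSigmaSubtype (fun x y : ZMod p => y ^ 2 = f x)),
      Fintype.card_sigma]
    exact Finset.sum_congr rfl fun x _ => Fintype.card_subtype _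
  rw [this]
  push_cast
  rw [Finset.sum_congr rfl fun x _ => key x, Finset.sum_add_distrib]
  simp [ZMod.card, add_comm]

/-- Proposition 3.17 of the paper.
Let `p` be an odd prime and `λ ∈ F_p` with `λ ≠ 0, -1`; let
`a = p − #{(x,y) : y² = x³ − 2x² + (λ/(λ+1))x}` and
`M = p − #{(x,y) : y² = (x−1)·(x² − (λ+1)⁻¹)}`.  Then `M² = a²`. -/
theorem statement7 (p : ℕ) [Fact p.Prime] (hodd : Odd p)
    (lam : ZMod p) (h0 : lam ≠ 0) (h1 : lam ≠ -1)
    (a : ℤ)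
    (ha : a = p - Nat.card {xy : ZMod p × ZMod p //
      xy.2 ^ 2 = xy.1 ^ 3 - 2 * xy.1 ^ 2 + (lam / (lam + 1)) * xy.1})
    (M : ℤ)
    (hM : M = p - Nat.card {xy : ZMod p × ZMod p //
      xy.2 ^ 2 = (xy.1 - 1) * (xy.1 ^ 2 - (lam + 1)⁻¹)}) :
    M ^ 2 = a ^ 2 := by
  set χ := quadraticChar (ZMod p)
  have hl1 : lam + 1 ≠ 0 := fun h => h1 (by linear_combination h)
  have ha' : a = -∑ x : ZMod p, χ (x ^ 3 - 2 * x ^ 2 + (lam / (lam + 1)) * x) := by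
    rw [ha, count_curve p hodd (fun x => x ^ 3 - 2 * x ^ 2 + (lam / (lam + 1)) * x)]; ring
  have hM' : M = -∑ x : ZMod p, χ ((x - 1) * (x ^ 2 - (lam + 1)⁻¹)) := by
    rw [hM, count_curve p hodd (fun x => (x - 1) * (x ^ 2 - (lam + 1)⁻¹))]; ring
  have hre : ∑ x : ZMod p, χ ((x - 1) * (x ^ 2 - (lam + 1)⁻¹))
      = χ (-1) * ∑ x : ZMod p, χ (x ^ 3 - 2 * x ^ 2 + (lam / (lam + 1)) * x) := by
    rw [Finset.mul_sum, ← Equiv.sum_comp (Equiv.subLeft (1 : ZMod p))]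
    refine Finset.sum_congr rfl fun x _ => ?_
    rw [← map_mul]
    congr 1
    show ((1 - x) - 1) * ((1 - x) ^ 2 - (lam + 1)⁻¹) = _
    field_simp
    ring
  have hm1 : χ (-1) ^ 2 = 1 := quadraticChar_sq_one (neg_ne_zero.mpr one_ne_zero)
  rw [hM', hre, ha']
  ring_nf
  rw [mul_comm]
  rw [hm1, mul_one]
  congr 1
  refine Finset.sum_congr rfl fun x _ => ?_
  congr 1
  ring
end

section
/- Let p be an odd prime. Then #{(t,x,y,z) ∈ F_p^4 : (x,y,z) ≠ (0,0,0) and t^2 = x·y·z·(x+y)·(y+z)·(−x+z)} = (p−1)·(p^2 + p + 1 + a_3). -/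
open Finset
set_option linter.unusedSectionVars false
variable {p : ℕ} [Fact p.Prime]

section prelim
variable (hp : p ≠ 2)

local notation "F" => ZMod p
local notation "χ" => quadraticChar (ZMod p)

include hp

lemma hchar : ringChar (ZMod p) ≠ 2 := by
  rw [ZMod.ringChar_zmod_n]; exact hp

lemma sum_chi : ∑ x : F, χ x = 0 := quadraticChar_sum_zero (hchar hp)

omit hp in
lemma chi_sq_mul {a : F} (ha : a ≠ 0) (b : F) : χ (a^2 * b) = χ b := by
  rw [map_mul, quadraticChar_sq_one' ha, one_mul]

omit hp in
lemma chi_inv (a : F) : χ (a⁻¹) = χ a := by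
  rcases eq_or_ne a 0 with rfl | ha
  · rw [inv_zero]
  · have h2 : (a⁻¹ : F) = a⁻¹^2 * a := by rw [sq]; field_simp
    rw [h2]; exact chi_sq_mul (inv_ne_zero ha) a

lemma card_sqrts (a : F) :
    (((univ : Finset F).filter (fun x => x^2 = a)).card : ℤ) = 1 + χ a := by
  have := quadraticChar_card_sqrts (hchar hp) a
  rw [add_comm] at this
  rw [← this]
  congr 1
  simp [Set.toFinset_setOf]

lemma sum_chi_shift {c : F} (hc : c ≠ 0) : ∑ x : F, χ (x * (x + c)) = -1 := by
  have h0 : ∑ x : F, χ (x * (x + c)) = ∑ x ∈ (univ : Finset F).erase 0, χ (x * (x + c)) := by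
    rw [Finset.sum_erase_eq_sub (mem_univ 0)]
    simp
  rw [h0]
  have h1 : ∑ x ∈ (univ : Finset F).erase 0, χ (x * (x + c))
      = ∑ y ∈ (univ : Finset F).erase 1, χ y := by
    refine Finset.sum_nbij' (fun x => 1 + c * x⁻¹) (fun y => c * (y - 1)⁻¹) ?_ ?_ ?_ ?_ ?_
    · intro a ha
      simp only [mem_erase, mem_univ, and_true] at ha ⊢
      intro h
      have : c * a⁻¹ = 0 := by linear_combination h
      rcases mul_eq_zero.mp this with h' | h'
      · exact hc h'
      · exact ha (inv_eq_zero.mp h')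
    · intro b hb
      simp only [mem_erase, mem_univ, and_true] at hb ⊢
      intro h
      rcases mul_eq_zero.mp h with h' | h'
      · exact hc h'
      · exact hb (by linear_combination (sub_eq_zero.mp (inv_eq_zero.mp h')))
    · intro a ha
      simp only [mem_erase, mem_univ, and_true] at ha
      field_simp
      rw [show a + c - a = c by ring, div_self hc]
    · intro b hb
      simp only [mem_erase, mem_univ, and_true] at hb
      have hb' : b - 1 ≠ 0 := sub_ne_zero.mpr hb
      field_simp
      ring
    · intro a ha
      simp only [mem_erase, mem_univ, and_true] at ha
      have key : a * (a + c) = a^2 * (1 + c * a⁻¹) := by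
        field_simp
      rw [key, chi_sq_mul ha]
  rw [h1, Finset.sum_erase_eq_sub (mem_univ 1), sum_chi hp]
  simp

lemma sum_chi_sub_left (y : F) : ∑ x : F, χ (x - y) = 0 := by
  rw [← Fintype.sum_equiv (Equiv.addRight y) (fun x => χ x) (fun z => χ (z - y))
    (fun x => by simp)]
  exact sum_chi hp

lemma sum_chi_sub_right (x : F) : ∑ y : F, χ (x - y) = 0 := by
  rw [← Fintype.sum_equiv (Equiv.subLeft x) (fun y => χ y) (fun z => χ (x - z))
    (fun y => by simp)]
  exact sum_chi hp

omit hp in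
lemma sum_comp_count (A : Finset (ZMod p)) (e : ZMod p → ZMod p) (g : ZMod p → ℤ) :
    ∑ k ∈ A, g (e k)
      = ∑ y : F, ((A.filter (fun k => e k = y)).card : ℤ) * g y := by
  have h1 : ∀ k ∈ A, g (e k) = ∑ y : F, if e k = y then g y else 0 := by
    intro k _
    rw [Finset.sum_ite_eq (univ : Finset F) (e k) g]
    simp
  rw [Finset.sum_congr rfl h1, Finset.sum_comm]
  refine Finset.sum_congr rfl fun y _ => ?_
  rw [Finset.sum_ite, Finset.sum_const, Finset.sum_const_zero, add_zero, nsmul_eq_mul]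

lemma sq_param (h : ZMod p → ℤ) : ∑ u : F, h (u^2) = ∑ s : F, (1 + χ s) * h s := by
  have h2 := sum_comp_count (univ : Finset F) (fun u => u^2) h
  rw [h2]
  refine Finset.sum_congr rfl fun s _ => ?_
  rw [card_sqrts hp s]

lemma conic (g : ZMod p → ℤ) :
    ∑ y : F, (1 + χ (y^2 - y)) * g y
      = g 0 + ∑ k ∈ (univ : Finset F).filter (fun k => k^2 ≠ 1), g ((1 - k^2)⁻¹) := by
  have h2 := sum_comp_count ((univ : Finset F).filter (fun k => k^2 ≠ 1))
      (fun k => (1 - k^2)⁻¹) g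
  rw [h2]
  have key : ∀ y : F, ((((univ : Finset F).filter (fun k => k^2 ≠ 1)).filter
      (fun k => (1 - k^2)⁻¹ = y)).card : ℤ)
      = if y = 0 then 0 else 1 + χ (y^2 - y) := by
    intro y
    rcases eq_or_ne y 0 with rfl | hy
    · rw [if_pos rfl]
      have hemp : (((univ : Finset F).filter (fun k => k^2 ≠ 1)).filter
          (fun k => (1 - k^2)⁻¹ = 0)) = ∅ := by
        rw [Finset.filter_filter, Finset.filter_eq_empty_iff]
        intro k _
        rintro ⟨h1, h2⟩
        exact h1 (by linear_combination -(sub_eq_zero.mp (inv_eq_zero.mp h2)))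
      rw [hemp]
      simp
    · rw [if_neg hy]
      have hy' : (y⁻¹ : F) ≠ 0 := inv_ne_zero hy
      have hset : (((univ : Finset F).filter (fun k => k^2 ≠ 1)).filter
          (fun k => (1 - k^2)⁻¹ = y))
          = (univ : Finset F).filter (fun k => k^2 = 1 - y⁻¹) := by
        rw [Finset.filter_filter]
        apply Finset.filter_congr
        intro k _
        constructor
        · rintro ⟨h1, h2⟩
          have hne : (1 - k^2 : F) ≠ 0 := fun h => h1 (by linear_combination -(sub_eq_zero.mp h))
          have : (1 - k^2 : F) = y⁻¹ := by
            rw [← h2, inv_inv]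
          linear_combination -this
        · intro hk
          have hne : (1 - k^2 : F) = y⁻¹ := by linear_combination -hk
          constructor
          · intro h; rw [h] at hne; simp only [sub_self] at hne; exact hy' hne.symm
          · rw [hne, inv_inv]
      rw [hset, card_sqrts hp]
      congr 1
      have : (1 - y⁻¹ : F) = (y⁻¹)^2 * (y^2 - y) := by field_simp
      rw [this, chi_sq_mul hy']
  calc ∑ y : F, (1 + χ (y^2 - y)) * g y
      = (1 + χ ((0:F)^2 - 0)) * g 0 + ∑ y ∈ (univ : Finset F).erase 0,
        (1 + χ (y^2 - y)) * g y := (Finset.add_sum_erase _ _ (mem_univ 0)).symm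
    _ = g 0 + ∑ y : F, (if y = 0 then 0 else 1 + χ (y^2 - y)) * g y := by
        rw [← Finset.add_sum_erase _ (fun y => (if y = 0 then (0:ℤ) else 1 + χ (y^2 - y)) * g y)
          (mem_univ 0)]
        have e0 : ((0:F)^2 - 0) = 0 := by ring
        rw [if_pos rfl, zero_mul, zero_add, e0, quadraticChar_zero]
        rw [add_zero, one_mul]
        congr 1
        refine Finset.sum_congr rfl fun y hy => ?_
        rw [if_neg (Finset.mem_erase.mp hy).1]
    _ = g 0 + ∑ y : F, ((((univ : Finset F).filter (fun k => k^2 ≠ 1)).filter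
          (fun k => (1 - k^2)⁻¹ = y)).card : ℤ) * g y := by
        congr 1
        refine Finset.sum_congr rfl fun y _ => ?_
        rw [key y]

lemma count_pairs (f : ZMod p → ZMod p) :
    (((univ : Finset (ZMod p × ZMod p)).filter (fun v => v.2^2 = f v.1)).card : ℤ)
      = ∑ x : F, (1 + χ (f x)) := by
  have hcard : ∀ x : F, (∑ y : F, if y^2 = f x then (1:ℤ) else 0) = 1 + χ (f x) := by
    intro x
    rw [← card_sqrts hp (f x), Finset.card_filter]
    push_cast
    rfl
  rw [Finset.card_filter]
  push_cast
  rw [Fintype.sum_prod_type]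
  exact Finset.sum_congr rfl fun x _ => hcard x

lemma count_main (G : ZMod p × ZMod p × ZMod p → ZMod p) (hG : G 0 = 0) :
    (((univ : Finset (ZMod p × (ZMod p × ZMod p × ZMod p))).filter
        (fun v => v.2 ≠ 0 ∧ v.1^2 = G v.2)).card : ℤ)
      = (∑ w : ZMod p × ZMod p × ZMod p, (1 + χ (G w))) - 1 := by
  have hcard : ∀ w : ZMod p × ZMod p × ZMod p,
      (∑ t : F, if (w ≠ 0 ∧ t^2 = G w) then (1:ℤ) else 0)
        = if w = 0 then 0 else 1 + χ (G w) := by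
    intro w
    rcases eq_or_ne w 0 with rfl | hw
    · simp
    · rw [if_neg hw]
      have : ∀ t : F, (if (w ≠ 0 ∧ t^2 = G w) then (1:ℤ) else 0)
          = (if t^2 = G w then (1:ℤ) else 0) := by
        intro t; simp [hw]
      rw [Finset.sum_congr rfl fun t _ => this t, ← card_sqrts hp (G w), Finset.card_filter]
      push_cast
      rfl
  rw [Finset.card_filter]
  push_cast
  rw [Fintype.sum_prod_type, Finset.sum_comm]
  rw [Finset.sum_congr rfl fun w _ => hcard w]
  rw [← Finset.add_sum_erase _ (fun w => if w = 0 then (0:ℤ) else 1 + χ (G w)) (mem_univ 0),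
      ← Finset.add_sum_erase _ (fun w => 1 + χ (G w)) (mem_univ 0)]
  rw [if_pos rfl, hG, quadraticChar_zero]
  have : ∑ w ∈ (univ : Finset (ZMod p × ZMod p × ZMod p)).erase 0,
      (if w = 0 then (0:ℤ) else 1 + χ (G w))
      = ∑ w ∈ (univ : Finset (ZMod p × ZMod p × ZMod p)).erase 0, (1 + χ (G w)) := by
    refine Finset.sum_congr rfl fun w hw => ?_
    rw [if_neg (Finset.mem_erase.mp hw).1]
  rw [this]
  ring
-- scaling step
lemma step_scaling :
    ∑ w : ZMod p × ZMod p × ZMod p,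
        χ (w.1 * w.2.1 * w.2.2 * (w.1 + w.2.1) * (w.2.1 + w.2.2) * (-w.1 + w.2.2))
      = ((p : ℤ) - 1) * ∑ x : F, ∑ y : F, χ ((x^2 - x) * (y^2 - y) * (x - y)) := by
  rw [Fintype.sum_prod_type]
  have h1 : ∀ x : F, ∑ yz : ZMod p × ZMod p,
      χ (x * yz.1 * yz.2 * (x + yz.1) * (yz.1 + yz.2) * (-x + yz.2))
      = ∑ y : F, ∑ z : F, χ (x * y * z * (x + y) * (y + z) * (-x + z)) := by
    intro x; rw [Fintype.sum_prod_type]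
  rw [Finset.sum_congr rfl fun x _ => h1 x]
  -- move z to the outside
  rw [Finset.sum_comm]
  have h2 : ∀ y : F, (∑ x : F, ∑ z : F, χ (x * y * z * (x + y) * (y + z) * (-x + z)))
      = ∑ z : F, ∑ x : F, χ (x * y * z * (x + y) * (y + z) * (-x + z)) := fun y => Finset.sum_comm
  rw [Finset.sum_congr rfl fun y _ => h2 y, Finset.sum_comm]
  -- now outer variable is z
  have key : ∀ z : F, (∑ y : F, ∑ x : F, χ (x * y * z * (x + y) * (y + z) * (-x + z)))
      = if z = 0 then 0 else ∑ x : F, ∑ y : F, χ ((x^2 - x) * (y^2 - y) * (x - y)) := by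
    intro z
    rcases eq_or_ne z 0 with rfl | hz
    · rw [if_pos rfl]
      refine Finset.sum_eq_zero fun y _ => Finset.sum_eq_zero fun x _ => ?_
      have : (x * y * 0 * (x + y) * (y + 0) * (-x + 0)) = 0 := by ring
      rw [this, quadraticChar_zero]
    · rw [if_neg hz]
      -- x = z * X, y = z * Y
      have hx : ∀ y : F, (∑ x : F, χ (x * y * z * (x + y) * (y + z) * (-x + z)))
          = ∑ X : F, χ ((z * X) * y * z * ((z * X) + y) * (y + z) * (-(z * X) + z)) := by
        intro y
        exact (Fintype.sum_equiv (Equiv.mulLeft₀ z hz)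
          (fun X => χ ((z * X) * y * z * ((z * X) + y) * (y + z) * (-(z * X) + z)))
          (fun x => χ (x * y * z * (x + y) * (y + z) * (-x + z))) (fun X => rfl)).symm
      rw [Finset.sum_congr rfl fun y _ => hx y, Finset.sum_comm]
      have hy : ∀ X : F, (∑ y : F, χ ((z * X) * y * z * ((z * X) + y) * (y + z) * (-(z * X) + z)))
          = ∑ Y : F, χ ((z * X) * (z * Y) * z * ((z * X) + (z * Y)) * ((z * Y) + z) * (-(z * X) + z)) := by
        intro X
        exact (Fintype.sum_equiv (Equiv.mulLeft₀ z hz)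
          (fun Y => χ ((z * X) * (z * Y) * z * ((z * X) + (z * Y)) * ((z * Y) + z) * (-(z * X) + z)))
          (fun y => χ ((z * X) * y * z * ((z * X) + y) * (y + z) * (-(z * X) + z))) (fun Y => rfl)).symm
      rw [Finset.sum_congr rfl fun X _ => hy X]
      -- now pull out z^6 and substitute X = 1 - x, Y = y - 1
      have hpt : ∀ X Y : F,
          χ ((z * X) * (z * Y) * z * ((z * X) + (z * Y)) * ((z * Y) + z) * (-(z * X) + z))
          = χ (X * Y * (X + Y) * (Y + 1) * (1 - X)) := by
        intro X Y
        have e : (z * X) * (z * Y) * z * ((z * X) + (z * Y)) * ((z * Y) + z) * (-(z * X) + z)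
            = (z^3)^2 * (X * Y * (X + Y) * (Y + 1) * (1 - X)) := by ring
        rw [e, chi_sq_mul (pow_ne_zero 3 hz)]
      rw [Finset.sum_congr rfl fun X _ => Finset.sum_congr rfl fun Y _ => hpt X Y]
      -- substitution X = 1 - x  (outer), Y = y - 1 (inner)
      refine Fintype.sum_equiv (Equiv.subLeft (1 : F))
        (fun X => ∑ Y : F, χ (X * Y * (X + Y) * (Y + 1) * (1 - X)))
        (fun x => ∑ y : F, χ ((x^2 - x) * (y^2 - y) * (x - y))) (fun X => ?_)
      refine Fintype.sum_equiv (Equiv.subRight (1 : F))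
        (fun y => χ (X * (y - 1) * (X + (y - 1)) * ((y - 1) + 1) * (1 - X)))
        (fun Y => χ (X * Y * (X + Y) * (Y + 1) * (1 - X))) (fun y => rfl) |>.symm.trans ?_
      refine Finset.sum_congr rfl fun y _ => ?_
      congr 1
      simp only [Equiv.subLeft_apply]
      ring
  rw [Finset.sum_congr rfl fun z _ => key z]
  rw [← Finset.add_sum_erase _ _ (mem_univ 0), if_pos rfl, zero_add]
  have : ∀ z ∈ (univ : Finset F).erase 0,
      (if z = 0 then 0 else ∑ x : F, ∑ y : F, χ ((x^2 - x) * (y^2 - y) * (x - y)))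
      = ∑ x : F, ∑ y : F, χ ((x^2 - x) * (y^2 - y) * (x - y)) := by
    intro z hz; rw [if_neg (Finset.mem_erase.mp hz).1]
  rw [Finset.sum_congr rfl this, Finset.sum_const, nsmul_eq_mul]
  congr 1
  rw [Finset.card_erase_of_mem (mem_univ 0), Finset.card_univ, ZMod.card]
  have hp1 : 1 ≤ p := (Fact.out : p.Prime).one_lt.le
  push_cast [Nat.cast_sub hp1]
  ring

lemma two_ne : (2 : F) ≠ 0 := Ring.two_ne_zero (hchar hp)

lemma sum_chi_one_sub_sq : ∑ k : F, χ (1 - k^2) = -χ (-1) := by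
  have h1 : ∀ k : F, χ (1 - k^2) = χ (-1) * χ (k^2 - 1) := by
    intro k
    rw [← map_mul]
    congr 1; ring
  rw [Finset.sum_congr rfl fun k _ => h1 k, ← Finset.mul_sum]
  have h2 : ∑ k : F, χ (k^2 - 1) = ∑ m : F, χ (m * (m + 2)) := by
    refine (Fintype.sum_equiv (Equiv.addRight (1 : F))
      (fun m => χ (m * (m + 2))) (fun k => χ (k^2 - 1)) (fun m => ?_)).symm
    simp only [Equiv.coe_addRight]
    congr 1; ring
  rw [h2, sum_chi_shift hp (two_ne hp)]
  ring

lemma sum_S_chi_e : ∑ k ∈ (univ : Finset F).filter (fun k => k^2 ≠ 1), χ ((1 - k^2)⁻¹)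
    = -χ (-1) := by
  have h1 : ∀ k ∈ (univ : Finset F).filter (fun k => k^2 ≠ 1),
      χ ((1 - k^2)⁻¹) = χ (1 - k^2) := fun k _ => chi_inv (1 - k^2)
  rw [Finset.sum_congr rfl h1]
  rw [Finset.sum_subset (Finset.filter_subset _ _) ?van]
  · exact sum_chi_one_sub_sq hp
  case van =>
    intro k _ hk
    simp only [mem_filter, mem_univ, true_and, not_not] at hk
    rw [hk]
    simp

lemma sum_S_chi_neg_e : ∑ l ∈ (univ : Finset F).filter (fun l => l^2 ≠ 1), χ (-(1 - l^2)⁻¹)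
    = -1 := by
  have h1 : ∀ l : F, χ (-(1 - l^2)⁻¹) = χ (-1) * χ ((1 - l^2)⁻¹) := by
    intro l; rw [← map_mul]; congr 1; ring
  rw [Finset.sum_congr rfl fun l _ => h1 l, ← Finset.mul_sum, sum_S_chi_e hp]
  have h2 : χ (-1) * χ (-1) = 1 := by
    rw [← map_mul]; norm_num
  linear_combination -h2

lemma step_U :
    ∑ x : F, ∑ y : F, χ ((x^2 - x) * (y^2 - y) * (x - y))
      = (∑ k : F, ∑ l : F, χ ((k^2 - l^2) * (1 - k^2) * (1 - l^2))) - 1 - χ (-1) := by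
  have expand : ∀ x y : F, χ ((x^2 - x) * (y^2 - y) * (x - y))
      = (1 + χ (x^2 - x)) * ((1 + χ (y^2 - y)) * χ (x - y))
        - (1 + χ (x^2 - x)) * χ (x - y) - (1 + χ (y^2 - y)) * χ (x - y) + χ (x - y) := by
    intro x y
    rw [map_mul, map_mul]
    ring
  rw [Finset.sum_congr rfl fun x _ => Finset.sum_congr rfl fun y _ => expand x y]
  simp only [Finset.sum_add_distrib, Finset.sum_sub_distrib]
  have hA : ∑ x : F, ∑ y : F, (1 + χ (x^2 - x)) * χ (x - y) = 0 := by
    refine Finset.sum_eq_zero fun x _ => ?_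
    rw [← Finset.mul_sum, sum_chi_sub_right hp x, mul_zero]
  have hB : ∑ x : F, ∑ y : F, (1 + χ (y^2 - y)) * χ (x - y) = 0 := by
    rw [Finset.sum_comm]
    refine Finset.sum_eq_zero fun y _ => ?_
    rw [← Finset.mul_sum, sum_chi_sub_left hp y, mul_zero]
  have hC : ∑ x : F, ∑ y : F, χ (x - y) = 0 :=
    Finset.sum_eq_zero fun x _ => sum_chi_sub_right hp x
  rw [hA, hB, hC]
  -- now the main term D
  have hD1 : ∀ x : F, ∑ y : F, (1 + χ (y^2 - y)) * χ (x - y)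
      = χ (x - 0) + ∑ k ∈ (univ : Finset F).filter (fun k => k^2 ≠ 1), χ (x - (1 - k^2)⁻¹) :=
    fun x => conic hp (fun t => χ (x - t))
  have hD2 : ∑ x : F, ∑ y : F, (1 + χ (x^2 - x)) * ((1 + χ (y^2 - y)) * χ (x - y))
      = ∑ x : F, (1 + χ (x^2 - x)) *
          (χ (x - 0) + ∑ k ∈ (univ : Finset F).filter (fun k => k^2 ≠ 1), χ (x - (1 - k^2)⁻¹)) := by
    refine Finset.sum_congr rfl fun x _ => ?_
    rw [← Finset.mul_sum, hD1 x]
  rw [hD2, conic hp (fun t => χ (t - 0)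
      + ∑ k ∈ (univ : Finset F).filter (fun k => k^2 ≠ 1), χ (t - (1 - k^2)⁻¹))]
  simp only [Finset.sum_add_distrib]
  have e0 : χ ((0:F) - 0) = 0 := by norm_num
  rw [e0]
  have eneg : ∀ k : F, χ ((0:F) - (1 - k^2)⁻¹) = χ (-(1 - k^2)⁻¹) := by
    intro k; congr 1; ring
  have epos : ∀ k : F, χ ((1 - k^2)⁻¹ - 0) = χ ((1 - k^2)⁻¹) := by
    intro k; congr 1; ring
  rw [Finset.sum_congr rfl fun k _ => eneg k, sum_S_chi_neg_e hp]
  rw [Finset.sum_congr rfl fun k _ => epos k, sum_S_chi_e hp]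
  -- double sum extension
  have hdd : ∑ k ∈ (univ : Finset F).filter (fun k => k^2 ≠ 1),
      ∑ l ∈ (univ : Finset F).filter (fun l => l^2 ≠ 1), χ ((1 - k^2)⁻¹ - (1 - l^2)⁻¹)
      = ∑ k : F, ∑ l : F, χ ((k^2 - l^2) * (1 - k^2) * (1 - l^2)) := by
    have inner : ∀ k ∈ (univ : Finset F).filter (fun k => k^2 ≠ 1),
        (∑ l ∈ (univ : Finset F).filter (fun l => l^2 ≠ 1), χ ((1 - k^2)⁻¹ - (1 - l^2)⁻¹))
        = ∑ l : F, χ ((k^2 - l^2) * (1 - k^2) * (1 - l^2)) := by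
      intro k hk
      simp only [mem_filter, mem_univ, true_and] at hk
      have hk' : (1 - k^2 : F) ≠ 0 := fun h => hk (by linear_combination -h)
      have point : ∀ l ∈ (univ : Finset F).filter (fun l => l^2 ≠ 1),
          χ ((1 - k^2)⁻¹ - (1 - l^2)⁻¹) = χ ((k^2 - l^2) * (1 - k^2) * (1 - l^2)) := by
        intro l hl
        simp only [mem_filter, mem_univ, true_and] at hl
        have hl' : (1 - l^2 : F) ≠ 0 := fun h => hl (by linear_combination -h)
        have key : (1 - k^2)⁻¹ - (1 - l^2)⁻¹
            = (((1 - k^2) * (1 - l^2))⁻¹)^2 * ((k^2 - l^2) * (1 - k^2) * (1 - l^2)) := by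
          field_simp
          ring
        rw [key, chi_sq_mul (inv_ne_zero (mul_ne_zero hk' hl'))]
      rw [Finset.sum_congr rfl point]
      refine Finset.sum_subset (Finset.filter_subset _ _) ?_
      intro l _ hl
      simp only [mem_filter, mem_univ, true_and, not_not] at hl
      have : ((k^2 - l^2) * (1 - k^2) * (1 - l^2) : F) = 0 := by rw [hl]; ring
      rw [this, quadraticChar_zero]
    rw [Finset.sum_congr rfl inner]
    refine Finset.sum_subset (Finset.filter_subset _ _) ?_
    intro k _ hk
    simp only [mem_filter, mem_univ, true_and, not_not] at hk
    refine Finset.sum_eq_zero fun l _ => ?_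
    have : ((k^2 - l^2) * (1 - k^2) * (1 - l^2) : F) = 0 := by rw [hk]; ring
    rw [this, quadraticChar_zero]
  rw [hdd]
  ring
lemma sum_chi_neg : ∑ x : F, χ (-x) = 0 := by
  rw [Fintype.sum_equiv (Equiv.neg F) (fun x => χ (-x)) (fun x => χ x) (fun x => by simp)]
  exact sum_chi hp

lemma one_add_ne {a : F} (ha : a ≠ -1) : (1 + a : F) ≠ 0 := by
  intro h
  exact ha (by linear_combination h)

lemma cayley_mem {a : F} (ha : a ≠ -1) : (1 - a) * (1 + a)⁻¹ ≠ -1 := by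
  intro h
  have h1 : (1 + a : F) ≠ 0 := one_add_ne hp ha
  have h3 : (1 - a) * (1 + a)⁻¹ * (1 + a) = -1 * (1 + a) := by rw [h]
  rw [inv_mul_cancel_right₀ h1] at h3
  exact two_ne hp (by linear_combination h3)

lemma cayley_invol {a : F} (ha : a ≠ -1) :
    (1 - (1 - a) * (1 + a)⁻¹) * (1 + (1 - a) * (1 + a)⁻¹)⁻¹ = a := by
  have h1 : (1 + a : F) ≠ 0 := one_add_ne hp ha
  have h2 : (1 + (1 - a) * (1 + a)⁻¹ : F) = 2 * (1 + a)⁻¹ := by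
    field_simp
    ring
  have h3 : (1 - (1 - a) * (1 + a)⁻¹ : F) = 2 * a * (1 + a)⁻¹ := by
    field_simp
    ring
  have h4 : (2 : F) ≠ 0 := two_ne hp
  rw [h2, h3, mul_inv, inv_inv]
  field_simp

lemma cayley_point {u v : F} (hu : u ≠ -1) (hv : v ≠ -1) :
    χ (((((1 - u) * (1 + u)⁻¹))^2 - (((1 - v) * (1 + v)⁻¹))^2)
        * (1 - (((1 - u) * (1 + u)⁻¹))^2) * (1 - (((1 - v) * (1 + v)⁻¹))^2))
      = χ (u * v * (v - u) * (1 - u * v)) := by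
  have hu1 : (1 + u : F) ≠ 0 := one_add_ne hp hu
  have hv1 : (1 + v : F) ≠ 0 := one_add_ne hp hv
  have h8 : (8 : F) ≠ 0 := by
    have h83 : (8 : F) = 2^3 := by norm_num
    rw [h83]; exact pow_ne_zero 3 (two_ne hp)
  have ht : (8 * ((1 + u)⁻¹)^2 * ((1 + v)⁻¹)^2 : F) ≠ 0 :=
    mul_ne_zero (mul_ne_zero h8 (pow_ne_zero 2 (inv_ne_zero hu1))) (pow_ne_zero 2 (inv_ne_zero hv1))
  have e1 : (1 : F) - (((1 - u) * (1 + u)⁻¹))^2 = 4 * u * ((1 + u)⁻¹)^2 := by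
    field_simp
    ring
  have e2 : (1 : F) - (((1 - v) * (1 + v)⁻¹))^2 = 4 * v * ((1 + v)⁻¹)^2 := by
    field_simp
    ring
  have e3 : (((1 - u) * (1 + u)⁻¹))^2 - (((1 - v) * (1 + v)⁻¹))^2
      = 4 * (v - u) * (1 - u * v) * ((1 + u)⁻¹)^2 * ((1 + v)⁻¹)^2 := by
    field_simp
    ring
  have key : ((((1 - u) * (1 + u)⁻¹))^2 - (((1 - v) * (1 + v)⁻¹))^2)
        * (1 - (((1 - u) * (1 + u)⁻¹))^2) * (1 - (((1 - v) * (1 + v)⁻¹))^2)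
      = (8 * ((1 + u)⁻¹)^2 * ((1 + v)⁻¹)^2)^2 * (u * v * (v - u) * (1 - u * v)) := by
    rw [e1, e2, e3]
    ring
  rw [key, chi_sq_mul ht]

lemma step_W0 :
    ∑ k : F, ∑ l : F, χ ((k^2 - l^2) * (1 - k^2) * (1 - l^2))
      = (∑ a : F, ∑ b : F, χ (a * b * (b - a) * (1 - a * b))) + 1 + χ (-1) := by
  set E : Finset F := (univ : Finset F).erase (-1) with hE
  -- restrict W₀ to E × E
  have hW : ∑ k : F, ∑ l : F, χ ((k^2 - l^2) * (1 - k^2) * (1 - l^2))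
      = ∑ k ∈ E, ∑ l ∈ E, χ ((k^2 - l^2) * (1 - k^2) * (1 - l^2)) := by
    rw [← Finset.add_sum_erase _ _ (mem_univ (-1 : F))]
    have hrow : ∑ l : F, χ ((((-1:F))^2 - l^2) * (1 - (-1:F)^2) * (1 - l^2)) = 0 := by
      refine Finset.sum_eq_zero fun l _ => ?_
      have : (((-1:F))^2 - l^2) * (1 - (-1:F)^2) * (1 - l^2) = 0 := by ring
      rw [this, quadraticChar_zero]
    rw [hrow, zero_add]
    refine Finset.sum_congr rfl fun k _ => ?_
    rw [← Finset.add_sum_erase _ _ (mem_univ (-1 : F))]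
    have : ((k^2 - (-1:F)^2) * (1 - k^2) * (1 - (-1:F)^2)) = 0 := by ring
    rw [this, quadraticChar_zero, zero_add]
  rw [hW]
  -- Cayley reindex on both variables
  have hCay : ∑ k ∈ E, ∑ l ∈ E, χ ((k^2 - l^2) * (1 - k^2) * (1 - l^2))
      = ∑ a ∈ E, ∑ b ∈ E, χ (a * b * (b - a) * (1 - a * b)) := by
    refine Finset.sum_nbij' (fun a => (1 - a) * (1 + a)⁻¹) (fun k => (1 - k) * (1 + k)⁻¹)
      ?_ ?_ ?_ ?_ ?_
    · intro a ha
      simp only [hE, mem_erase, mem_univ, and_true] at ha ⊢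
      exact cayley_mem hp ha
    · intro k hk
      simp only [hE, mem_erase, mem_univ, and_true] at hk ⊢
      exact cayley_mem hp hk
    · intro a ha
      simp only [hE, mem_erase, mem_univ, and_true] at ha
      exact cayley_invol hp ha
    · intro k hk
      simp only [hE, mem_erase, mem_univ, and_true] at hk
      exact cayley_invol hp hk
    · intro a ha
      simp only [hE, mem_erase, mem_univ, and_true] at ha
      -- inner sum: same reindex in b
      refine Finset.sum_nbij' (fun b => (1 - b) * (1 + b)⁻¹) (fun l => (1 - l) * (1 + l)⁻¹)
        ?_ ?_ ?_ ?_ ?_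
      · intro b hb
        simp only [hE, mem_erase, mem_univ, and_true] at hb ⊢
        exact cayley_mem hp hb
      · intro l hl
        simp only [hE, mem_erase, mem_univ, and_true] at hl ⊢
        exact cayley_mem hp hl
      · intro b hb
        simp only [hE, mem_erase, mem_univ, and_true] at hb
        exact cayley_invol hp hb
      · intro l hl
        simp only [hE, mem_erase, mem_univ, and_true] at hl
        exact cayley_invol hp hl
      · intro b hb
        simp only [hE, mem_erase, mem_univ, and_true] at hb
        have hpt := cayley_point hp (cayley_mem hp ha) (cayley_mem hp hb)
        rw [cayley_invol hp ha, cayley_invol hp hb] at hpt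
        exact hpt
  rw [hCay]
  -- un-restrict to Y
  have hrowA : ∑ b : F, χ ((-1 : F) * b * (b - (-1)) * (1 - (-1) * b)) = -1 := by
    rw [← Finset.add_sum_erase _ _ (mem_univ (-1 : F))]
    have h0 : ((-1 : F) * (-1) * ((-1) - (-1)) * (1 - (-1) * (-1))) = 0 := by ring
    rw [h0, quadraticChar_zero, zero_add]
    have hpt : ∀ b ∈ (univ : Finset F).erase (-1),
        χ ((-1 : F) * b * (b - (-1)) * (1 - (-1) * b)) = χ (-b) := by
      intro b hb
      have hb1 : (1 + b : F) ≠ 0 := one_add_ne hp (Finset.mem_erase.mp hb).1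
      have : ((-1 : F) * b * (b - (-1)) * (1 - (-1) * b)) = (1 + b)^2 * (-b) := by ring
      rw [this, chi_sq_mul hb1]
    rw [Finset.sum_congr rfl hpt, Finset.sum_erase_eq_sub (mem_univ (-1 : F)), sum_chi_neg hp]
    norm_num
  have hrowB : ∀ a ∈ E, χ (a * (-1 : F) * ((-1) - a) * (1 - a * (-1))) = χ a := by
    intro a ha
    have ha1 : (1 + a : F) ≠ 0 := one_add_ne hp (by simpa [hE] using ha)
    have : (a * (-1 : F) * ((-1) - a) * (1 - a * (-1))) = (1 + a)^2 * a := by ring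
    rw [this, chi_sq_mul ha1]
  have hsplit : ∑ a : F, ∑ b : F, χ (a * b * (b - a) * (1 - a * b))
      = (∑ a ∈ E, ∑ b ∈ E, χ (a * b * (b - a) * (1 - a * b))) + (-χ (-1)) + (-1) := by
    rw [← Finset.add_sum_erase _ _ (mem_univ (-1 : F)), hrowA]
    have hinner : ∀ a ∈ E, ∑ b : F, χ (a * b * (b - a) * (1 - a * b))
        = (∑ b ∈ E, χ (a * b * (b - a) * (1 - a * b))) + χ a := by
      intro a ha
      rw [← Finset.add_sum_erase _ _ (mem_univ (-1 : F)), hrowB a ha]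
      ring
    rw [Finset.sum_congr rfl hinner, Finset.sum_add_distrib]
    have : ∑ a ∈ E, χ a = -χ (-1) := by
      rw [hE, Finset.sum_erase_eq_sub (mem_univ (-1 : F)), sum_chi hp]
      ring
    rw [this]
    ring
  rw [hsplit]
  ring
lemma one_ne_negone : (1 : F) ≠ -1 := by
  intro h
  exact two_ne hp (by linear_combination h)

lemma sum_sq_shift : ∑ s : F, χ ((s - 1)^2) = (p : ℤ) - 1 := by
  rw [← Finset.add_sum_erase _ _ (mem_univ (1 : F))]
  have h0 : χ (((1:F) - 1)^2) = 0 := by norm_num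
  rw [h0, zero_add]
  have h1 : ∀ s ∈ (univ : Finset F).erase 1, χ ((s - 1)^2) = 1 := by
    intro s hs
    exact quadraticChar_sq_one' (sub_ne_zero.mpr (Finset.mem_erase.mp hs).1)
  rw [Finset.sum_congr rfl h1, Finset.sum_const, nsmul_eq_mul, mul_one,
    Finset.card_erase_of_mem (mem_univ 1), Finset.card_univ, ZMod.card]
  have hp1 : 1 ≤ p := (Fact.out : p.Prime).one_lt.le
  push_cast [Nat.cast_sub hp1]
  ring

lemma part1 : ∑ w : F, ∑ s : F, χ ((s - 1) * w * (s * w^2 - 1)) = (p:ℤ) * (1 + χ (-1)) := by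
  have hval : ∀ w : F, ∑ s : F, χ ((s - 1) * w * (s * w^2 - 1))
      = -χ w + ((if w = 1 then (p:ℤ) else 0) + (if w = -1 then (p:ℤ) * χ (-1) else 0)) := by
    intro w
    rcases eq_or_ne w 1 with rfl | hw1
    · rw [if_pos rfl, if_neg (one_ne_negone hp)]
      have e : ∀ s : F, ((s - 1) * 1 * (s * 1^2 - 1)) = (s - 1)^2 := by intro s; ring
      rw [Finset.sum_congr rfl fun s _ => by rw [e s], sum_sq_shift hp, map_one]
      ring
    rcases eq_or_ne w (-1) with rfl | hwm1
    · rw [if_neg (fun h => one_ne_negone hp h.symm), if_pos rfl]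
      have e : ∀ s : F, ((s - 1) * (-1) * (s * (-1:F)^2 - 1)) = (s-1)^2 * (-1) := by
        intro s; ring
      have hpt : ∀ s ∈ (univ : Finset F).erase 1,
          χ ((s - 1) * (-1) * (s * (-1:F)^2 - 1)) = χ (-1) := by
        intro s hs
        rw [e s, chi_sq_mul (sub_ne_zero.mpr (Finset.mem_erase.mp hs).1)]
      rw [← Finset.add_sum_erase _ _ (mem_univ (1 : F))]
      have h0 : χ (((1:F) - 1) * (-1) * (1 * (-1:F)^2 - 1)) = 0 := by norm_num
      rw [h0, zero_add, Finset.sum_congr rfl hpt, Finset.sum_const, nsmul_eq_mul,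
        Finset.card_erase_of_mem (mem_univ 1), Finset.card_univ, ZMod.card]
      have hp1 : 1 ≤ p := (Fact.out : p.Prime).one_lt.le
      push_cast [Nat.cast_sub hp1]
      ring
    rcases eq_or_ne w 0 with rfl | hw0
    · rw [if_neg hw1, if_neg hwm1]
      have l1 : ∑ s : F, χ ((s - 1) * (0:F) * (s * 0^2 - 1)) = 0 :=
        Finset.sum_eq_zero fun s _ => by
          have : ((s - 1) * (0:F) * (s * 0^2 - 1)) = 0 := by ring
          rw [this, quadraticChar_zero]
      rw [l1, quadraticChar_zero]
      ring
    · rw [if_neg hw1, if_neg hwm1]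
      have hsq : (w^2 - 1 : F) ≠ 0 := by
        have := mul_ne_zero (sub_ne_zero.mpr hw1) (fun h => hwm1 (by linear_combination h) : w + 1 ≠ 0)
        intro h
        exact this (by linear_combination h)
      have hc : (1 - (w⁻¹)^2 : F) ≠ 0 := by
        rw [inv_pow]
        intro h
        have h2 : (w^2)⁻¹ = 1 := by linear_combination -h
        exact hsq (by rw [inv_eq_one.mp h2]; ring)
      have hpt : ∀ s : F, χ ((s - 1) * w * (s * w^2 - 1))
          = χ w * χ ((s - 1) * (s - (w⁻¹)^2)) := by
        intro s
        have e : ((s - 1) * w * (s * w^2 - 1)) = w^2 * (w * ((s - 1) * (s - (w⁻¹)^2))) := by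
          field_simp
        rw [e, chi_sq_mul hw0, map_mul]
      rw [Finset.sum_congr rfl fun s _ => hpt s, ← Finset.mul_sum]
      have hshift : ∑ s : F, χ ((s - 1) * (s - (w⁻¹)^2)) = -1 := by
        rw [← Fintype.sum_equiv (Equiv.addRight (1 : F))
          (fun t => χ (t * (t + (1 - (w⁻¹)^2))))
          (fun s => χ ((s - 1) * (s - (w⁻¹)^2))) (fun t => by
            simp only [Equiv.coe_addRight]
            congr 1
            ring)]
        exact sum_chi_shift hp hc
      rw [hshift]
      ring
  rw [Finset.sum_congr rfl fun w _ => hval w]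
  simp only [Finset.sum_add_distrib]
  have s1 : ∑ w : F, -χ w = 0 := by
    rw [Finset.sum_neg_distrib]
    rw [sum_chi hp]
    ring
  have s2 : ∑ w : F, (if w = 1 then (p:ℤ) else 0) = p := by
    rw [Finset.sum_ite_eq' univ (1 : F) (fun _ => (p:ℤ))]
    simp
  have s3 : ∑ w : F, (if w = -1 then (p:ℤ) * χ (-1) else 0) = (p:ℤ) * χ (-1) := by
    rw [Finset.sum_ite_eq' univ (-1 : F) (fun _ => (p:ℤ) * χ (-1))]
    simp
  rw [s1, s2, s3]
  ring
omit hp in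
lemma step_Y :
    ∑ a : F, ∑ b : F, χ (a * b * (b - a) * (1 - a * b))
      = χ (-1) * ∑ m : F, ∑ w : F, χ ((m^2 - m) * (w^3 - m * w)) := by
  -- first: per-a reindex b = a * m
  have h1 : ∀ a : F, ∑ b : F, χ (a * b * (b - a) * (1 - a * b))
      = ∑ m : F, χ (a * (m^2 - m) * (1 - a^2 * m)) := by
    intro a
    rcases eq_or_ne a 0 with rfl | ha
    · have l1 : ∑ b : F, χ ((0:F) * b * (b - 0) * (1 - 0 * b)) = 0 :=
        Finset.sum_eq_zero fun b _ => by
          have : ((0:F) * b * (b - 0) * (1 - 0 * b)) = 0 := by ring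
          rw [this, quadraticChar_zero]
      have l2 : ∑ m : F, χ ((0:F) * (m^2 - m) * (1 - 0^2 * m)) = 0 :=
        Finset.sum_eq_zero fun m _ => by
          have : ((0:F) * (m^2 - m) * (1 - 0^2 * m)) = 0 := by ring
          rw [this, quadraticChar_zero]
      rw [l1, l2]
    · rw [← Fintype.sum_equiv (Equiv.mulLeft₀ a ha)
        (fun m => χ (a * (a * m) * ((a * m) - a) * (1 - a * (a * m))))
        (fun b => χ (a * b * (b - a) * (1 - a * b))) (fun m => rfl)]
      refine Finset.sum_congr rfl fun m _ => ?_
      have e : a * (a * m) * ((a * m) - a) * (1 - a * (a * m))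
          = a^2 * (a * (m^2 - m) * (1 - a^2 * m)) := by ring
      rw [e, chi_sq_mul ha]
  rw [Finset.sum_congr rfl fun a _ => h1 a, Finset.sum_comm]
  -- per-m reindex a = m⁻¹ * w
  rw [Finset.mul_sum]
  refine Finset.sum_congr rfl fun m _ => ?_
  rcases eq_or_ne m 0 with rfl | hm
  · refine (Finset.sum_eq_zero fun a _ => ?_).trans ?_
    · have : (a * ((0:F)^2 - 0) * (1 - a^2 * 0)) = 0 := by ring
      rw [this, quadraticChar_zero]
    · rw [Finset.sum_eq_zero fun w _ => ?_, mul_zero]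
      have : (((0:F)^2 - 0) * (w^3 - 0 * w)) = 0 := by ring
      rw [this, quadraticChar_zero]
  · rw [← Fintype.sum_equiv (Equiv.mulLeft₀ m⁻¹ (inv_ne_zero hm))
      (fun w => χ ((m⁻¹ * w) * (m^2 - m) * (1 - (m⁻¹ * w)^2 * m)))
      (fun a => χ (a * (m^2 - m) * (1 - a^2 * m))) (fun w => rfl)]
    rw [Finset.mul_sum]
    refine Finset.sum_congr rfl fun w _ => ?_
    have e : (m⁻¹ * w) * (m^2 - m) * (1 - (m⁻¹ * w)^2 * m)
        = (m⁻¹)^2 * (-((m^2 - m) * (w^3 - m * w))) := by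
      field_simp
      ring
    rw [e, chi_sq_mul (inv_ne_zero hm)]
    have e2 : (-((m^2 - m) * (w^3 - m * w)) : F) = (-1) * ((m^2 - m) * (w^3 - m * w)) := by ring
    rw [e2, map_mul]

lemma step_prod :
    (∑ x : F, χ (x^3 - x)) * (∑ x : F, χ (x^3 - x))
      = (p : ℤ) * (1 + χ (-1)) + ∑ m : F, ∑ w : F, χ ((m^2 - m) * (w^3 - m * w)) := by
  have expand : (∑ x : F, χ (x^3 - x)) * (∑ x : F, χ (x^3 - x))
      = ∑ u : F, ∑ v : F, χ ((u^3 - u) * (v^3 - v)) := by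
    rw [Finset.sum_mul_sum]
    exact Finset.sum_congr rfl fun u _ => Finset.sum_congr rfl fun v _ => (map_mul _ _ _).symm
  rw [expand]
  -- per-u reindex v = u * w, giving J(u^2, w); u = 0 row equals ∑ χ w = 0 in both forms
  have h1 : ∀ u : F, ∑ v : F, χ ((u^3 - u) * (v^3 - v))
      = ∑ w : F, χ ((u^2 - 1) * w * (u^2 * w^2 - 1)) := by
    intro u
    rcases eq_or_ne u 0 with rfl | hu
    · refine (Finset.sum_eq_zero fun v _ => ?_).trans ?_
      · have : (((0:F)^3 - 0) * (v^3 - v)) = 0 := by ring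
        rw [this, quadraticChar_zero]
      · have e : ∀ w : F, (((0:F)^2 - 1) * w * (0^2 * w^2 - 1)) = w := by intro w; ring
        rw [Finset.sum_congr rfl fun w _ => by rw [e w]]
        exact (sum_chi hp).symm
    · rw [← Fintype.sum_equiv (Equiv.mulLeft₀ u hu)
        (fun w => χ ((u^3 - u) * ((u * w)^3 - (u * w))))
        (fun v => χ ((u^3 - u) * (v^3 - v))) (fun w => rfl)]
      refine Finset.sum_congr rfl fun w _ => ?_
      have e : (u^3 - u) * ((u * w)^3 - (u * w)) = u^2 * ((u^2 - 1) * w * (u^2 * w^2 - 1)) := by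
        ring
      rw [e, chi_sq_mul hu]
  rw [Finset.sum_congr rfl fun u _ => h1 u, Finset.sum_comm]
  -- square parametrization in u
  have h2 : ∀ w : F, ∑ u : F, χ ((u^2 - 1) * w * (u^2 * w^2 - 1))
      = ∑ s : F, (1 + χ s) * χ ((s - 1) * w * (s * w^2 - 1)) := by
    intro w
    exact sq_param hp (fun s => χ ((s - 1) * w * (s * w^2 - 1)))
  rw [Finset.sum_congr rfl fun w _ => h2 w]
  have split : ∀ w : F, ∑ s : F, (1 + χ s) * χ ((s - 1) * w * (s * w^2 - 1))
      = (∑ s : F, χ ((s - 1) * w * (s * w^2 - 1)))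
        + ∑ s : F, χ (s * ((s - 1) * w * (s * w^2 - 1))) := by
    intro w
    rw [← Finset.sum_add_distrib]
    refine Finset.sum_congr rfl fun s _ => ?_
    rw [map_mul (quadraticChar (ZMod p)) s ((s - 1) * w * (s * w^2 - 1))]
    ring
  rw [Finset.sum_congr rfl fun w _ => split w, Finset.sum_add_distrib]
  -- Part 1 : ∑_w ∑_s χ((s-1) w (s w² - 1)) = p (1 + χ(-1))
  have part1 := part1 hp
  -- Part 2 : ∑_w ∑_s χ(s(s-1) w (s w²-1)) = V'
  have part2 : ∑ w : F, ∑ s : F, χ (s * ((s - 1) * w * (s * w^2 - 1)))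
      = ∑ m : F, ∑ w : F, χ ((m^2 - m) * (w^3 - m * w)) := by
    rw [Finset.sum_comm]
    refine Finset.sum_congr rfl fun s _ => ?_
    rcases eq_or_ne s 0 with rfl | hs
    · refine (Finset.sum_eq_zero fun w _ => ?_).trans (Finset.sum_eq_zero fun w _ => ?_).symm
      · have : ((0:F) * ((0 - 1) * w * (0 * w^2 - 1))) = 0 := by ring
        rw [this, quadraticChar_zero]
      · have : (((0:F)^2 - 0) * (w^3 - 0 * w)) = 0 := by ring
        rw [this, quadraticChar_zero]
    · rw [← Fintype.sum_equiv (Equiv.mulLeft₀ s⁻¹ (inv_ne_zero hs))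
        (fun w => χ (s * ((s - 1) * (s⁻¹ * w) * (s * (s⁻¹ * w)^2 - 1))))
        (fun w => χ (s * ((s - 1) * w * (s * w^2 - 1)))) (fun w => rfl)]
      refine Finset.sum_congr rfl fun w _ => ?_
      have e : s * ((s - 1) * (s⁻¹ * w) * (s * (s⁻¹ * w)^2 - 1))
          = (s⁻¹)^2 * ((s^2 - s) * (w^3 - s * w)) := by
        field_simp
      rw [e, chi_sq_mul (inv_ne_zero hs)]
  rw [part1, part2]
lemma chi_neg_one_mod1 (h : p % 4 = 1) : χ (-1 : F) = 1 := by
  have hne : (-1 : F) ≠ 0 := by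
    intro hh
    exact one_ne_zero (α := F) (by linear_combination -hh)
  rw [quadraticChar_one_iff_isSquare hne]
  rw [FiniteField.isSquare_neg_one_iff, ZMod.card]
  omega

lemma chi_neg_one_mod3 (h : p % 4 = 3) : χ (-1 : F) = -1 := by
  rw [quadraticChar_neg_one_iff_not_isSquare]
  rw [FiniteField.isSquare_neg_one_iff, ZMod.card]
  omega

lemma SE_zero (h : p % 4 = 3) : ∑ x : F, χ (x^3 - x) = 0 := by
  have h1 : ∑ x : F, χ (x^3 - x) = ∑ x : F, χ ((-x)^3 - (-x)) := by
    exact Fintype.sum_equiv (Equiv.neg F) _ _ (fun x => by simp)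
  have h2 : ∀ x : F, χ ((-x)^3 - (-x)) = χ (-1 : F) * χ (x^3 - x) := by
    intro x
    rw [← map_mul]
    congr 1
    ring
  rw [Finset.sum_congr rfl fun x _ => h2 x, ← Finset.mul_sum, chi_neg_one_mod3 hp h] at h1
  linarith

end prelim

/-- Proposition 4.4 of the paper.
Let `p` be an odd prime, `a₂ = p − #{(x,y) : y² = x³ − x}`, and `a₃ = a₂² − 2p` if
`p ≡ 1 (mod 4)`, `a₃ = 0` if `p ≡ 3 (mod 4)`.  Then the number of
`(t,x,y,z) ∈ F_p⁴` with `(x,y,z) ≠ (0,0,0)` and `t² = x·y·z·(x+y)·(y+z)·(−x+z)`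
equals `(p−1)·(p² + p + 1 + a₃)`. -/
theorem statement12 (p : ℕ) [Fact p.Prime] (hodd : Odd p)
    (a2 : ℤ)
    (ha2 : a2 = p - Nat.card {xy : ZMod p × ZMod p // xy.2 ^ 2 = xy.1 ^ 3 - xy.1})
    (a3 : ℤ)
    (ha31 : p % 4 = 1 → a3 = a2 ^ 2 - 2 * p)
    (ha33 : p % 4 = 3 → a3 = 0) :
    (Nat.card {v : ZMod p × ZMod p × ZMod p × ZMod p //
        (v.2.1, v.2.2.1, v.2.2.2) ≠ (0, 0, 0) ∧
        v.1 ^ 2 = v.2.1 * v.2.2.1 * v.2.2.2 * (v.2.1 + v.2.2.1) *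
          (v.2.2.1 + v.2.2.2) * (-v.2.1 + v.2.2.2)} : ℤ) =
      (p - 1) * (p ^ 2 + p + 1 + a3) := by
  have hp : p ≠ 2 := by
    rintro rfl
    exact (by norm_num : ¬ Odd 2) hodd
  -- the count for the elliptic curve
  have hcardE : (Nat.card {xy : ZMod p × ZMod p // xy.2 ^ 2 = xy.1 ^ 3 - xy.1} : ℤ)
      = (p : ℤ) + ∑ x : ZMod p, quadraticChar (ZMod p) (x^3 - x) := by
    rw [Nat.card_eq_fintype_card, Fintype.card_subtype]
    have hcp := count_pairs hp (fun x => x^3 - x)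
    rw [show ((univ : Finset (ZMod p × ZMod p)).filter (fun xy => xy.2 ^ 2 = xy.1 ^ 3 - xy.1))
        = ((univ : Finset (ZMod p × ZMod p)).filter
            (fun v => v.2^2 = (fun x => x^3 - x) v.1)) from rfl]
    rw [hcp, Finset.sum_add_distrib, Finset.sum_const, Finset.card_univ, ZMod.card]
    simp
  have hSEa2 : ∑ x : ZMod p, quadraticChar (ZMod p) (x^3 - x) = -a2 := by
    rw [ha2, hcardE]
    ring
  -- the main count
  have hG0 : (fun w : ZMod p × ZMod p × ZMod p =>
      w.1 * w.2.1 * w.2.2 * (w.1 + w.2.1) * (w.2.1 + w.2.2) * (-w.1 + w.2.2)) 0 = 0 := by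
    norm_num
  have hcardN : (Nat.card {v : ZMod p × ZMod p × ZMod p × ZMod p //
        (v.2.1, v.2.2.1, v.2.2.2) ≠ (0, 0, 0) ∧
        v.1 ^ 2 = v.2.1 * v.2.2.1 * v.2.2.2 * (v.2.1 + v.2.2.1) *
          (v.2.2.1 + v.2.2.2) * (-v.2.1 + v.2.2.2)} : ℤ)
      = (∑ w : ZMod p × ZMod p × ZMod p, (1 + quadraticChar (ZMod p)
          (w.1 * w.2.1 * w.2.2 * (w.1 + w.2.1) * (w.2.1 + w.2.2) * (-w.1 + w.2.2)))) - 1 := by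
    rw [Nat.card_eq_fintype_card, Fintype.card_subtype]
    have hpred : ((univ : Finset (ZMod p × (ZMod p × ZMod p × ZMod p))).filter
        (fun v => (v.2.1, v.2.2.1, v.2.2.2) ≠ (0, 0, 0) ∧
          v.1 ^ 2 = v.2.1 * v.2.2.1 * v.2.2.2 * (v.2.1 + v.2.2.1) *
            (v.2.2.1 + v.2.2.2) * (-v.2.1 + v.2.2.2)))
        = ((univ : Finset (ZMod p × (ZMod p × ZMod p × ZMod p))).filter
          (fun v => v.2 ≠ 0 ∧ v.1^2 = (fun w : ZMod p × ZMod p × ZMod p =>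
            w.1 * w.2.1 * w.2.2 * (w.1 + w.2.1) * (w.2.1 + w.2.2) * (-w.1 + w.2.2)) v.2)) := by
      apply Finset.filter_congr
      intro v _
      exact Iff.rfl
    rw [hpred]
    exact count_main hp (fun w => w.1 * w.2.1 * w.2.2 * (w.1 + w.2.1) * (w.2.1 + w.2.2)
      * (-w.1 + w.2.2)) hG0
  rw [hcardN]
  -- assemble the sum
  have hsum : ∑ w : ZMod p × ZMod p × ZMod p, (1 + quadraticChar (ZMod p)
        (w.1 * w.2.1 * w.2.2 * (w.1 + w.2.1) * (w.2.1 + w.2.2) * (-w.1 + w.2.2)))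
      = (p:ℤ)^3 + ((p:ℤ) - 1) * ∑ x : ZMod p, ∑ y : ZMod p,
          quadraticChar (ZMod p) ((x^2 - x) * (y^2 - y) * (x - y)) := by
    rw [Finset.sum_add_distrib, Finset.sum_const, Finset.card_univ]
    rw [← step_scaling hp, nsmul_eq_mul, mul_one]
    rw [show Fintype.card (ZMod p × ZMod p × ZMod p) = p^3 by
      simp [Fintype.card_prod, ZMod.card]; ring]
    push_cast
    ring
  rw [hsum]
  -- the character-sum chain
  have hU : ∑ x : ZMod p, ∑ y : ZMod p,
        quadraticChar (ZMod p) ((x^2 - x) * (y^2 - y) * (x - y))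
      = quadraticChar (ZMod p) (-1) *
        ((∑ x : ZMod p, quadraticChar (ZMod p) (x^3 - x))
          * (∑ x : ZMod p, quadraticChar (ZMod p) (x^3 - x))
          - (p:ℤ) * (1 + quadraticChar (ZMod p) (-1))) := by
    rw [step_U hp, step_W0 hp, step_Y]
    have hsp := step_prod hp
    linear_combination (-(quadraticChar (ZMod p) (-1 : ZMod p))) * hsp
  rw [hU, hSEa2]
  have hp4 : p % 4 = 1 ∨ p % 4 = 3 := by
    have := Nat.odd_iff.mp hodd
    omega
  rcases hp4 with h4 | h4
  · rw [chi_neg_one_mod1 hp h4, ha31 h4]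
    ring
  · rw [chi_neg_one_mod3 hp h4, ha33 h4]
    have hz : -a2 = 0 := by
      rw [← hSEa2]
      exact SE_zero hp h4
    rw [hz]
    ring
end

section
/- Let p be an odd prime, let φ : F_p → ℤ be the quadratic character, and let c ∈ F_p with c ≠ 0. Then #{(t,x,y,z) ∈ F_p^4 : (x,y,z) ≠ (0,0,0) and t^2 = c·x·y·z·(x+y)·(y+z)·(−x+z)} = (p−1)·(p^2 + p + 1 + φ(c)·a_3). -/
open Finset

namespace St13

variable {p : ℕ} [Fact p.Prime]

local notation "φ" => quadraticChar (ZMod p)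

lemma hchar (hodd : Odd p) : ringChar (ZMod p) ≠ 2 := by
  rw [ZMod.ringChar_zmod_n]
  rintro rfl
  exact (Nat.not_odd_iff_even.mpr (by norm_num)) hodd

lemma two_ne (hodd : Odd p) : (2 : ZMod p) ≠ 0 := Ring.two_ne_zero (hchar hodd)

/-- number of square roots -/
lemma card_sqrts (hodd : Odd p) (a : ZMod p) :
    ((univ.filter fun t : ZMod p => t ^ 2 = a).card : ℤ) = φ a + 1 := by
  have := quadraticChar_card_sqrts (hchar hodd) a
  rw [← this]
  congr 1
  rw [Set.toFinset_setOf]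

lemma sum_phi (hodd : Odd p) : ∑ a : ZMod p, φ a = 0 := quadraticChar_sum_zero (hchar hodd)

lemma phi_sq_mul {a : ZMod p} (ha : a ≠ 0) (b : ZMod p) : φ (a ^ 2 * b) = φ b := by
  rw [map_mul, quadraticChar_sq_one' ha, one_mul]

/-- generic fiberwise resummation -/
lemma sum_comp_fiber {α γ : Type*} [Fintype α] [Fintype γ] [DecidableEq γ]
    (f : α → γ) (g : γ → ℤ) :
    ∑ x : α, g (f x) = ∑ y : γ, ((univ.filter fun x => f x = y).card : ℤ) * g y := by
  rw [← Finset.sum_fiberwise univ f (fun x => g (f x))]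
  refine Finset.sum_congr rfl fun y _ => ?_
  rw [Finset.sum_congr rfl (fun x hx => by rw [(Finset.mem_filter.mp hx).2]),
    Finset.sum_const, nsmul_eq_mul]

/-- ∑ φ((x-a)(x-b)) -/
lemma sum_quad (hodd : Odd p) (a b : ZMod p) :
    ∑ x : ZMod p, φ ((x - a) * (x - b)) = if a = b then (p : ℤ) - 1 else -1 := by
  split_ifs with h
  · subst h
    have : ∀ x : ZMod p, φ ((x - a) * (x - a)) = if x = a then 0 else 1 := by
      intro x
      split_ifs with hx
      · simp [hx]
      · rw [← sq, quadraticChar_sq_one' (sub_ne_zero.mpr hx)]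
    rw [Finset.sum_congr rfl fun x _ => this x]
    rw [Finset.sum_ite, Finset.sum_const, Finset.sum_const]
    simp only [smul_eq_mul, mul_zero, mul_one, zero_add, nsmul_eq_mul]
    have h1 : (univ.filter fun x : ZMod p => ¬ x = a).card = p - 1 := by
      rw [Finset.filter_not, Finset.card_sdiff_of_subset (Finset.filter_subset _ _)]
      simp [Finset.filter_eq', ZMod.card p, Finset.card_univ]
    rw [h1]
    have hp1 : 1 ≤ p := (Fact.out : p.Prime).one_lt.le
    push_cast [Nat.cast_sub hp1]
    ring
  · -- shift x → x + a, then e := b - a ≠ 0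
    have he : b - a ≠ 0 := sub_ne_zero.mpr (Ne.symm h)
    have shift : ∑ x : ZMod p, φ ((x - a) * (x - b))
        = ∑ x : ZMod p, φ (x * (x - (b - a))) := by
      refine Fintype.sum_equiv (Equiv.subRight a) _ _ fun x => ?_
      simp only [Equiv.subRight_apply]
      ring_nf
    rw [shift]
    set e := b - a with hedef
    -- drop x = 0
    have drop : ∑ x : ZMod p, φ (x * (x - e))
        = ∑ x ∈ univ.filter (fun x : ZMod p => ¬ x = 0), φ (x * (x - e)) := by
      rw [Finset.sum_filter_of_ne]
      intro x _ hx h0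
      subst h0; simp at hx
    rw [drop]
    have key : ∑ x ∈ univ.filter (fun x : ZMod p => ¬ x = 0), φ (x * (x - e))
        = ∑ u ∈ univ.filter (fun u : ZMod p => ¬ u = 1), φ u := by
      refine Finset.sum_nbij' (fun x => 1 - e * x⁻¹) (fun u => e * (1 - u)⁻¹) ?_ ?_ ?_ ?_ ?_
      · intro x hx
        simp only [mem_filter, mem_univ, true_and] at hx ⊢
        intro hcon
        have : e * x⁻¹ = 0 := by linear_combination -hcon
        rcases mul_eq_zero.mp this with h' | h'
        · exact he h'
        · exact hx (inv_eq_zero.mp h')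
      · intro u hu
        simp only [mem_filter, mem_univ, true_and] at hu ⊢
        exact mul_ne_zero he (inv_ne_zero (sub_ne_zero.mpr (Ne.symm hu)))
      · intro x hx
        simp only [mem_filter, mem_univ, true_and] at hx
        field_simp
        rw [sub_sub_cancel, div_self he]
      · intro u hu
        simp only [mem_filter, mem_univ, true_and] at hu
        have : (1 : ZMod p) - u ≠ 0 := sub_ne_zero.mpr (Ne.symm hu)
        field_simp
        ring
      · intro x hx
        simp only [mem_filter, mem_univ, true_and] at hx
        have hxx : x * (x - e) = x ^ 2 * (1 - e * x⁻¹) := by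
          field_simp
        rw [hxx, phi_sq_mul hx]
    rw [key]
    have : ∑ u ∈ univ.filter (fun u : ZMod p => ¬ u = 1), φ u
        = (∑ u : ZMod p, φ u) - φ 1 := by
      rw [Finset.filter_not, Finset.sum_sdiff_eq_sub (Finset.filter_subset _ _)]
      simp [Finset.filter_eq']
    rw [this, sum_phi hodd, map_one]
    ring


/-- fiber of the squaring map -/
lemma card_fiber_sq (hodd : Odd p) (m : ZMod p) :
    ((univ.filter fun σ : ZMod p => σ ^ 2 = m).card : ℤ) = φ m + 1 :=
  card_sqrts hodd m

/-- fiber of (u,v) ↦ (u+v, uv) -/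
lemma card_fiber_sym (hodd : Odd p) (y : ZMod p × ZMod p) :
    ((univ.filter fun w : ZMod p × ZMod p => (w.1 + w.2, w.1 * w.2) = y).card : ℤ)
      = φ (y.1 ^ 2 - 4 * y.2) + 1 := by
  obtain ⟨σ, q⟩ := y
  rw [← card_sqrts hodd (σ ^ 2 - 4 * q)]
  have h2 : (2 : ZMod p) ≠ 0 := Ring.two_ne_zero (by
    rw [ZMod.ringChar_zmod_n]; rintro rfl; exact (by norm_num : ¬ Odd 2) hodd)
  congr 1
  refine Finset.card_nbij' (fun w => w.1 - w.2)
    (fun d => ((σ + d) * 2⁻¹, (σ - d) * 2⁻¹)) ?_ ?_ ?_ ?_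
  · rintro ⟨u, v⟩ hw
    simp only [mem_coe, mem_filter, mem_univ, true_and, Prod.mk.injEq] at hw ⊢
    obtain ⟨h1, hq⟩ := hw
    subst h1
    linear_combination (-4 : ZMod p) * hq
  · intro d hd
    simp only [mem_coe, mem_filter, mem_univ, true_and, Prod.mk.injEq] at hd ⊢
    constructor
    · field_simp; ring
    · field_simp
      linear_combination -hd
  · rintro ⟨u, v⟩ hw
    simp only [mem_coe, mem_filter, mem_univ, true_and, Prod.mk.injEq] at hw
    obtain ⟨h1, _⟩ := hw
    subst h1
    have : ∀ a : ZMod p, a * 2⁻¹ * 2 = a := fun a => by field_simp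
    ext <;> simp only
    · field_simp; ring
    · field_simp; ring
  · intro d hd
    simp only
    field_simp
    ring


/-- the cubic character sum -/
noncomputable def c (l : ZMod p) : ℤ :=
  ∑ n : ZMod p, φ (n * (n - 1) * (n - l))

lemma sum_phi_c (hodd : Odd p) (h1 : φ (-1) = 1) :
    ∑ l : ZMod p, φ l * c l = 1 := by
  have inner : ∀ n : ZMod p, ∑ l : ZMod p, φ l * φ (n * (n - 1) * (n - l))
      = φ (n * (n - 1)) * (if (0 : ZMod p) = n then (p : ℤ) - 1 else -1) := by
    intro n
    rw [← sum_quad hodd 0 n, Finset.mul_sum]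
    refine Finset.sum_congr rfl fun l _ => ?_
    rw [← map_mul]
    have : φ (l * (n * (n - 1) * (n - l)))
        = φ (-1) * φ ((n * (n - 1)) * ((l - 0) * (l - n))) := by
      rw [← map_mul]; congr 1; ring
    rw [this, h1, one_mul, map_mul]
  have step : ∑ l : ZMod p, φ l * c l
      = ∑ n : ZMod p, φ (n * (n - 1)) * (if (0 : ZMod p) = n then (p : ℤ) - 1 else -1) := by
    unfold c
    simp_rw [Finset.mul_sum]
    rw [Finset.sum_comm]
    exact Finset.sum_congr rfl fun n _ => inner n
  rw [step]
  have allneg : ∀ n : ZMod p,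
      φ (n * (n - 1)) * (if (0 : ZMod p) = n then (p : ℤ) - 1 else -1)
        = -φ ((n - 0) * (n - 1)) := by
    intro n
    by_cases h0 : (0 : ZMod p) = n
    · rw [if_pos h0, ← h0]; simp
    · rw [if_neg h0, sub_zero]; ring
  rw [Finset.sum_congr rfl fun n _ => allneg n, Finset.sum_neg_distrib,
    sum_quad hodd 0 1, if_neg zero_ne_one]
  ring

/-- T in terms of c -/
lemma T_eq_c (h1 : φ (-1) = 1) :
    ∑ X : ZMod p, ∑ Y : ZMod p, φ (X * Y * (X + Y) * (Y + 1) * (1 - X))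
      = ∑ X : ZMod p, φ (X * (1 - X)) * c X := by
  refine Finset.sum_congr rfl fun X _ => ?_
  have : ∀ Y : ZMod p, φ (X * Y * (X + Y) * (Y + 1) * (1 - X))
      = φ (X * (1 - X)) * φ (Y * (Y + 1) * (Y + X)) := by
    intro Y
    rw [← map_mul]; congr 1; ring
  rw [Finset.sum_congr rfl fun Y _ => this Y, ← Finset.mul_sum]
  congr 1
  unfold c
  refine Fintype.sum_equiv (Equiv.neg (ZMod p)) _ _ fun n => ?_
  simp only [Equiv.neg_apply]
  have : φ (-n * (-n - 1) * (-n - X)) = φ (-1) * φ (n * (n + 1) * (n + X)) := by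
    rw [← map_mul]; congr 1; ring
  rw [this, h1, one_mul]

/-- the p ≡ 3 mod 4 case: T = 0 -/
lemma T_eq_zero (hodd : Odd p) (h1 : φ (-1) = -1) :
    ∑ X : ZMod p, ∑ Y : ZMod p, φ (X * Y * (X + Y) * (Y + 1) * (1 - X)) = 0 := by
  have h2 : (2 : ZMod p) ≠ 0 := Ring.two_ne_zero (by
    rw [ZMod.ringChar_zmod_n]; rintro rfl; exact (by norm_num : ¬ Odd 2) hodd)
  rw [← Finset.sum_product']
  set f : ZMod p × ZMod p → ℤ :=
    fun w => φ (w.1 * w.2 * (w.1 + w.2) * (w.2 + 1) * (1 - w.1)) with hf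
  set g : ZMod p × ZMod p → ZMod p × ZMod p :=
    fun w => if w.1 = 0 then w else (w.1⁻¹, w.2 * w.1⁻¹) with hg
  have hX0 : ∀ w : ZMod p × ZMod p, w.1 = 0 → f w = 0 := by
    intro w h0; simp only [hf, h0, zero_mul, MulChar.map_zero]
  have key : ∀ w : ZMod p × ZMod p, w.1 ≠ 0 → f (g w) = - f w := by
    rintro ⟨X, Y⟩ h0
    have hX : X ≠ 0 := h0
    have hinv : X⁻¹ ≠ 0 := inv_ne_zero hX
    simp only [hf, hg, if_neg hX]
    have harg : (X⁻¹ * (Y * X⁻¹) * (X⁻¹ + Y * X⁻¹) * (Y * X⁻¹ + 1) * (1 - X⁻¹)) * (X ^ 3) ^ 2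
        = -1 * (X * Y * (X + Y) * (Y + 1) * (1 - X)) := by
      have hXi : X⁻¹ * X = 1 := inv_mul_cancel₀ hX
      linear_combination (- X*Y^2 - X*Y^3 - X^2*Y + X^2*Y^3 + X^3*Y + X^3*Y^2
        - X⁻¹*X^2*Y^2 - X⁻¹*X^2*Y^3 - X⁻¹*X^3*Y + X⁻¹*X^3*Y^3 + X⁻¹*X^4*Y + X⁻¹*X^4*Y^2
        - X⁻¹^2*X^3*Y^2 - X⁻¹^2*X^3*Y^3 - X⁻¹^2*X^4*Y + X⁻¹^2*X^4*Y^3 + X⁻¹^2*X^5*Y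
        + X⁻¹^2*X^5*Y^2 - X⁻¹^3*X^4*Y^2 - X⁻¹^3*X^4*Y^3 - X⁻¹^3*X^5*Y + X⁻¹^3*X^5*Y^3
        - X⁻¹^4*X^5*Y^2 - X⁻¹^4*X^5*Y^3) * hXi
    have step2 : φ ((X⁻¹ * (Y * X⁻¹) * (X⁻¹ + Y * X⁻¹) * (Y * X⁻¹ + 1) * (1 - X⁻¹)) * (X ^ 3) ^ 2)
        = φ (X⁻¹ * (Y * X⁻¹) * (X⁻¹ + Y * X⁻¹) * (Y * X⁻¹ + 1) * (1 - X⁻¹)) := by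
      rw [map_mul, quadraticChar_sq_one' (pow_ne_zero 3 hX), mul_one]
    rw [← step2, harg, map_mul, h1]
    ring
  refine Finset.sum_ninvolution g ?_ ?_ (fun w => Finset.mem_univ _) ?_
  · intro w
    show f w + f (g w) = 0
    by_cases h0 : w.1 = 0
    · rw [hX0 w h0]
      have hgw : g w = w := by simp [hg, h0]
      rw [hgw, hX0 w h0]; ring
    · rw [key w h0]; ring
  · intro w hfw
    have hfw' : f w ≠ 0 := hfw
    by_cases h0 : w.1 = 0
    · exact absurd (hX0 w h0) hfw'
    · intro hcon
      have h1' : w.1⁻¹ = w.1 := by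
        have := congrArg Prod.fst hcon
        simpa [hg, if_neg h0] using this
      have hsq : (w.1 - 1) * (w.1 + 1) = 0 := by
        have hm : w.1 * w.1 = 1 := by
          nth_rewrite 1 [← h1']
          exact inv_mul_cancel₀ h0
        linear_combination hm
      rcases mul_eq_zero.mp hsq with h | h
      · have hw1 : w.1 = 1 := by linear_combination h
        apply hfw'
        simp only [hf, hw1, sub_self, mul_zero, MulChar.map_zero]
      · have hw1 : w.1 = -1 := by linear_combination h
        have h2' : w.2 * w.1⁻¹ = w.2 := by
          have := congrArg Prod.snd hcon
          simpa [hg, if_neg h0] using this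
        have hy : w.2 = 0 := by
          rw [hw1] at h2'
          have : w.2 * (-1 : ZMod p)⁻¹ = -w.2 := by
            rw [inv_neg, inv_one]; ring
          rw [this] at h2'
          have h2w : (2 : ZMod p) * w.2 = 0 := by linear_combination h2' - 2*h2'
          rcases mul_eq_zero.mp h2w with h' | h'
          · exact absurd h' h2
          · exact h'
        apply hfw'
        simp only [hf, hy, mul_zero, zero_mul, MulChar.map_zero]
  · intro w
    by_cases h0 : w.1 = 0
    · simp [hg, h0]
    · have hinv : w.1⁻¹ ≠ 0 := inv_ne_zero h0
      simp only [hg, if_neg h0]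
      simp only [if_neg hinv, inv_inv]
      rw [Prod.ext_iff]
      refine ⟨rfl, ?_⟩
      simp only
      field_simp


lemma sum_phi_shift (hodd : Odd p) (a : ZMod p) : ∑ m : ZMod p, φ (m + a) = 0 := by
  rw [← sum_phi hodd]
  exact Fintype.sum_equiv (Equiv.addRight a) _ _ fun m => rfl

lemma phi_four (hodd : Odd p) : φ (4 : ZMod p) = 1 := by
  have : (4 : ZMod p) = 2 ^ 2 := by norm_num
  rw [this]
  exact quadraticChar_sq_one' (two_ne hodd)

lemma main_chain (hodd : Odd p) (h1 : φ (-1) = 1) :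
    (∑ u : ZMod p, φ (u * (1 - u ^ 2))) ^ 2
      = 2 * p + ∑ X : ZMod p, ∑ Y : ZMod p, φ (X * Y * (X + Y) * (Y + 1) * (1 - X)) := by
  have h2 : (2 : ZMod p) ≠ 0 := two_ne hodd
  set G : ZMod p × ZMod p → ℤ :=
    fun y => φ (y.2 * ((1 + y.2) ^ 2 - y.1 ^ 2)) with hG
  -- Step A
  have stepA : (∑ u : ZMod p, φ (u * (1 - u ^ 2))) ^ 2
      = ∑ w : ZMod p × ZMod p, G (w.1 + w.2, w.1 * w.2) := by
    rw [sq, Finset.sum_mul_sum, ← Finset.sum_product', Finset.univ_product_univ]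
    refine Finset.sum_congr rfl fun w _ => ?_
    rw [hG, ← map_mul]
    congr 1
    ring
  -- Step B
  have stepB : ∑ w : ZMod p × ZMod p, G (w.1 + w.2, w.1 * w.2)
      = (∑ y : ZMod p × ZMod p, φ (y.1 ^ 2 - 4 * y.2) * G y)
        + ∑ y : ZMod p × ZMod p, G y := by
    rw [sum_comp_fiber (fun w : ZMod p × ZMod p => (w.1 + w.2, w.1 * w.2)) G,
      ← Finset.sum_add_distrib]
    refine Finset.sum_congr rfl fun y _ => ?_
    rw [card_fiber_sym hodd y]
    ring
  -- Step C : ∑ G = p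
  have stepC : ∑ y : ZMod p × ZMod p, G y = p := by
    rw [← Finset.univ_product_univ, Finset.sum_product]
    -- now ∑ σ ∑ q; swap to ∑ q ∑ σ
    rw [Finset.sum_comm]
    have inner : ∀ q : ZMod p, ∑ σ : ZMod p, G (σ, q)
        = φ q * (if q = -1 then (p : ℤ) - 1 else -1) := by
      intro q
      have e1 : ∀ σ : ZMod p, G (σ, q)
          = φ q * φ ((σ - (1 + q)) * (σ - (-(1 + q)))) := by
        intro σ
        rw [hG]
        simp only
        rw [← map_mul]
        have : q * ((1 + q) ^ 2 - σ ^ 2) = -1 * (q * ((σ - (1 + q)) * (σ - (-(1 + q))))) := by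
          ring
        rw [this, map_mul, h1, one_mul, map_mul]
      rw [Finset.sum_congr rfl fun σ _ => e1 σ, ← Finset.mul_sum, sum_quad hodd]
      congr 1
      have : ((1 + q : ZMod p) = -(1 + q)) ↔ q = -1 := by
        constructor
        · intro h
          have h4 : (2 : ZMod p) * (1 + q) = 0 := by linear_combination h
          rcases mul_eq_zero.mp h4 with h' | h'
          · exact absurd h' h2
          · linear_combination h'
        · intro h; rw [h]; ring
      simp only [this]
    rw [Finset.sum_congr rfl fun q _ => inner q]
    have e2 : ∀ q : ZMod p, φ q * (if q = -1 then (p : ℤ) - 1 else -1)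
        = -φ q + (if q = -1 then (p : ℤ) else 0) := by
      intro q
      by_cases h : q = -1
      · rw [if_pos h, if_pos h, h, h1]; ring
      · rw [if_neg h, if_neg h]; ring
    rw [Finset.sum_congr rfl fun q _ => e2 q, Finset.sum_add_distrib,
      Finset.sum_neg_distrib, sum_phi hodd, Finset.sum_ite_eq' univ (-1 : ZMod p) fun _ => (p:ℤ)]
    simp
  -- Step D/E/F : the U term
  have stepU : ∑ y : ZMod p × ZMod p, φ (y.1 ^ 2 - 4 * y.2) * G y
      = (p : ℤ) + ∑ X : ZMod p, φ (X * (1 - X)) * c X := by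
    rw [← Finset.univ_product_univ, Finset.sum_product, Finset.sum_comm]
    -- now : ∑ q ∑ σ, φ(σ² − 4q) * G (σ, q)
    have reidx : ∀ q : ZMod p, ∑ σ : ZMod p, φ (σ ^ 2 - 4 * q) * G (σ, q)
        = ∑ m : ZMod p, (φ m + 1) * φ ((m - 4 * q) * (q * ((1 + q) ^ 2 - m))) := by
      intro q
      have e3 : ∀ σ : ZMod p, φ (σ ^ 2 - 4 * q) * G (σ, q)
          = φ ((σ ^ 2 - 4 * q) * (q * ((1 + q) ^ 2 - σ ^ 2))) := by
        intro σ
        show φ (σ ^ 2 - 4 * q) * φ (q * ((1 + q) ^ 2 - σ ^ 2)) = _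
        rw [← map_mul]
      rw [Finset.sum_congr rfl fun σ _ => e3 σ,
        sum_comp_fiber (fun σ : ZMod p => σ ^ 2)
          (fun m : ZMod p => φ ((m - 4 * q) * (q * ((1 + q) ^ 2 - m))))]
      refine Finset.sum_congr rfl fun m _ => ?_
      rw [card_fiber_sq hodd m]
    rw [Finset.sum_congr rfl fun q _ => reidx q]
    have split : ∀ q : ZMod p,
        ∑ m : ZMod p, (φ m + 1) * φ ((m - 4 * q) * (q * ((1 + q) ^ 2 - m)))
        = (∑ m : ZMod p, φ (m * ((m - 4 * q) * (q * ((1 + q) ^ 2 - m)))))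
          + ∑ m : ZMod p, φ ((m - 4 * q) * (q * ((1 + q) ^ 2 - m))) := by
      intro q
      rw [← Finset.sum_add_distrib]
      refine Finset.sum_congr rfl fun m _ => ?_
      rw [map_mul (quadraticChar (ZMod p)) m ((m - 4 * q) * (q * ((1 + q) ^ 2 - m)))]
      ring
    rw [Finset.sum_congr rfl fun q _ => split q, Finset.sum_add_distrib]
    -- Step E : second piece = p
    have stepE : ∑ q : ZMod p, ∑ m : ZMod p, φ ((m - 4 * q) * (q * ((1 + q) ^ 2 - m))) = p := by
      have inner : ∀ q : ZMod p, ∑ m : ZMod p, φ ((m - 4 * q) * (q * ((1 + q) ^ 2 - m)))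
          = φ q * (if q = 1 then (p : ℤ) - 1 else -1) := by
        intro q
        have e4 : ∀ m : ZMod p, φ ((m - 4 * q) * (q * ((1 + q) ^ 2 - m)))
            = φ q * φ ((m - 4 * q) * (m - (1 + q) ^ 2)) := by
          intro m
          have : (m - 4 * q) * (q * ((1 + q) ^ 2 - m))
              = -1 * (q * ((m - 4 * q) * (m - (1 + q) ^ 2))) := by ring
          rw [this, map_mul, h1, one_mul, map_mul]
        rw [Finset.sum_congr rfl fun m _ => e4 m, ← Finset.mul_sum, sum_quad hodd]
        congr 1
        have : ((4 * q : ZMod p) = (1 + q) ^ 2) ↔ q = 1 := by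
          constructor
          · intro h
            have hsq : ((q - 1 : ZMod p)) ^ 2 = 0 := by linear_combination -h
            have := pow_eq_zero_iff (n := 2) (by norm_num) |>.mp hsq
            linear_combination this
          · intro h; rw [h]; norm_num
        simp only [this]
      rw [Finset.sum_congr rfl fun q _ => inner q]
      have e5 : ∀ q : ZMod p, φ q * (if q = 1 then (p : ℤ) - 1 else -1)
          = -φ q + (if q = 1 then (p : ℤ) else 0) := by
        intro q
        by_cases h : q = 1
        · rw [if_pos h, if_pos h, h, map_one]; ring
        · rw [if_neg h, if_neg h]; ring
      rw [Finset.sum_congr rfl fun q _ => e5 q, Finset.sum_add_distrib,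
        Finset.sum_neg_distrib, sum_phi hodd,
        Finset.sum_ite_eq' univ (1 : ZMod p) fun _ => (p:ℤ)]
      simp
    -- Step F : first piece = T'
    have stepF : ∑ q : ZMod p, ∑ m : ZMod p, φ (m * ((m - 4 * q) * (q * ((1 + q) ^ 2 - m))))
        = ∑ X : ZMod p, φ (X * (1 - X)) * c X := by
      have inner : ∀ q : ZMod p, ∑ m : ZMod p, φ (m * ((m - 4 * q) * (q * ((1 + q) ^ 2 - m))))
          = if q = -1 then -1 else
              φ (4 * q * ((1 + q)⁻¹) ^ 2) * c (4 * q * ((1 + q)⁻¹) ^ 2) := by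
        intro q
        by_cases hq : q = -1
        · rw [if_pos hq]
          subst hq
          have e6 : ∀ m : ZMod p, φ (m * ((m - 4 * (-1)) * ((-1) * ((1 + (-1)) ^ 2 - m))))
              = φ (m ^ 2 * (m + 4)) := by
            intro m; congr 1; ring
          rw [Finset.sum_congr rfl fun m _ => e6 m]
          have e7 : ∀ m : ZMod p, φ (m ^ 2 * (m + 4))
              = φ (m + 4) - (if m = 0 then φ (4 : ZMod p) else 0) := by
            intro m
            by_cases hm : m = 0
            · rw [if_pos hm, hm]; simp
            · rw [if_neg hm, phi_sq_mul hm]; ring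
          rw [Finset.sum_congr rfl fun m _ => e7 m, Finset.sum_sub_distrib,
            sum_phi_shift hodd, Finset.sum_ite_eq' univ (0 : ZMod p) fun _ => φ (4:ZMod p),
            phi_four hodd]
          simp
        · rw [if_neg hq]
          have hw : (1 + q : ZMod p) ≠ 0 := by
            intro h; apply hq; linear_combination h
          set w : ZMod p := 1 + q with hwdef
          set μ : ZMod p := 4 * q * (w⁻¹) ^ 2 with hmu
          have hmuw : μ * w ^ 2 = 4 * q := by
            rw [hmu]
            field_simp
          have e8 : ∀ n : ZMod p, φ ((w ^ 2 * n) * ((w ^ 2 * n - 4 * q) * (q * (w ^ 2 - w ^ 2 * n))))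
              = φ q * φ (n * (n - 1) * (n - μ)) := by
            intro n
            have harg : (w ^ 2 * n) * ((w ^ 2 * n - 4 * q) * (q * (w ^ 2 - w ^ 2 * n)))
                = (w ^ 3) ^ 2 * (-1 * (q * (n * (n - 1) * (n - μ)))) := by
              linear_combination (w ^ 2 * n * q * (w ^ 2 - w ^ 2 * n)) * hmuw
            rw [harg, phi_sq_mul (pow_ne_zero 3 hw), map_mul, h1, one_mul, map_mul]
          calc ∑ m : ZMod p, φ (m * ((m - 4 * q) * (q * ((1 + q) ^ 2 - m))))
              = ∑ n : ZMod p, φ ((w ^ 2 * n) * ((w ^ 2 * n - 4 * q) * (q * (w ^ 2 - w ^ 2 * n)))) := by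
                refine (Fintype.sum_equiv (Equiv.mulLeft₀ (w ^ 2) (pow_ne_zero 2 hw)) _ _
                  fun n => ?_).symm
                simp only [Equiv.coe_fn_mk, Equiv.mulLeft₀_apply]
                rfl
            _ = ∑ n : ZMod p, φ q * φ (n * (n - 1) * (n - μ)) :=
                Finset.sum_congr rfl fun n _ => e8 n
            _ = φ q * c μ := by rw [← Finset.mul_sum]; rfl
            _ = φ μ * c μ := by
                congr 1
                by_cases hq0 : q = 0
                · rw [hmu, hq0]; simp
                · rw [hmu, show (4 * q * (w⁻¹) ^ 2 : ZMod p) = (2 * w⁻¹) ^ 2 * q by ring,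
                    phi_sq_mul (mul_ne_zero h2 (inv_ne_zero hw))]
      rw [Finset.sum_congr rfl fun q _ => inner q]
      -- split off q = -1
      rw [Finset.sum_ite, Finset.sum_const]
      have hcard : (univ.filter fun q : ZMod p => q = -1).card = 1 := by
        rw [Finset.filter_eq']
        simp
      rw [hcard]
      -- W : sum over q ≠ -1 of ψ(μ q)  →  Cayley
      have cay_inv : ∀ q : ZMod p, ¬ q = -1 →
          (1 - ((1 - q) * (1 + q)⁻¹)) * (1 + (1 - q) * (1 + q)⁻¹)⁻¹ = q := by
        intro q hq
        have hw : (1 + q : ZMod p) ≠ 0 := fun h => hq (by linear_combination h)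
        have h1q : (1 + (1 - q) * (1 + q)⁻¹ : ZMod p) = 2 * (1 + q)⁻¹ := by
          field_simp
          norm_num
        have h2q : (1 - (1 - q) * (1 + q)⁻¹ : ZMod p) = 2 * q * (1 + q)⁻¹ := by
          field_simp
          ring
        rw [h1q, h2q, mul_inv, inv_inv]
        rw [show (2 * q * (1 + q)⁻¹ * (2⁻¹ * (1 + q)) : ZMod p)
            = q * (2 * 2⁻¹) * ((1 + q)⁻¹ * (1 + q)) by ring,
          mul_inv_cancel₀ h2, inv_mul_cancel₀ hw, mul_one, mul_one]
      have cayley : ∑ q ∈ univ.filter (fun q : ZMod p => ¬ q = -1),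
            φ (4 * q * ((1 + q)⁻¹) ^ 2) * c (4 * q * ((1 + q)⁻¹) ^ 2)
          = ∑ d ∈ univ.filter (fun d : ZMod p => ¬ d = -1),
            φ (1 - d ^ 2) * c (1 - d ^ 2) := by
        refine Finset.sum_nbij' (fun q => (1 - q) * (1 + q)⁻¹) (fun d => (1 - d) * (1 + d)⁻¹)
          ?_ ?_ ?_ ?_ ?_
        · intro q hq
          simp only [mem_filter, mem_univ, true_and] at hq ⊢
          intro hcon
          have hw : (1 + q : ZMod p) ≠ 0 := fun h => hq (by linear_combination h)
          have : (1 - q : ZMod p) = -(1 + q) := by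
            have := congrArg (· * (1 + q)) hcon
            rw [mul_assoc, inv_mul_cancel₀ hw, mul_one] at this
            linear_combination this
          have h20 : (2 : ZMod p) = 0 := by linear_combination this
          exact h2 h20
        · intro d hd
          simp only [mem_filter, mem_univ, true_and] at hd ⊢
          intro hcon
          have hw : (1 + d : ZMod p) ≠ 0 := fun h => hd (by linear_combination h)
          have : (1 - d : ZMod p) = -(1 + d) := by
            have := congrArg (· * (1 + d)) hcon
            rw [mul_assoc, inv_mul_cancel₀ hw, mul_one] at this
            linear_combination this
          have h20 : (2 : ZMod p) = 0 := by linear_combination this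
          exact h2 h20
        · intro q hq
          simp only [mem_filter, mem_univ, true_and] at hq
          exact cay_inv q hq
        · intro d hd
          simp only [mem_filter, mem_univ, true_and] at hd
          exact cay_inv d hd
        · intro q hq
          simp only [mem_filter, mem_univ, true_and] at hq
          have hw : (1 + q : ZMod p) ≠ 0 := fun h => hq (by linear_combination h)
          have key : (4 * q * ((1 + q)⁻¹) ^ 2 : ZMod p) = 1 - ((1 - q) * (1 + q)⁻¹) ^ 2 := by
            field_simp
            ring
          rw [key]
      rw [cayley]
      -- add back d = -1 (term is 0)
      have back : ∑ d ∈ univ.filter (fun d : ZMod p => ¬ d = -1),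
            φ (1 - d ^ 2) * c (1 - d ^ 2)
          = ∑ d : ZMod p, φ (1 - d ^ 2) * c (1 - d ^ 2) := by
        apply Finset.sum_filter_of_ne
        intro d _ hne hcon
        apply hne
        rw [hcon] at *
        have : (1 - (-1 : ZMod p) ^ 2) = 0 := by ring
        rw [this] at *
        simp
      rw [back]
      -- fiber over λ = 1 - d²
      have fiber : ∑ d : ZMod p, φ (1 - d ^ 2) * c (1 - d ^ 2)
          = ∑ l : ZMod p, (φ (1 - l) + 1) * (φ l * c l) := by
        rw [sum_comp_fiber (fun d : ZMod p => 1 - d ^ 2) (fun l => φ l * c l)]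
        refine Finset.sum_congr rfl fun l _ => ?_
        congr 1
        have hfe : (univ.filter fun d : ZMod p => 1 - d ^ 2 = l)
            = (univ.filter fun σ : ZMod p => σ ^ 2 = 1 - l) := by
          apply Finset.filter_congr
          intro d _
          constructor
          · intro h; linear_combination -h
          · intro h; linear_combination -h
        rw [hfe, card_fiber_sq hodd (1 - l)]
      rw [fiber]
      have final : ∑ l : ZMod p, (φ (1 - l) + 1) * (φ l * c l)
          = (∑ l : ZMod p, φ (l * (1 - l)) * c l) + ∑ l : ZMod p, φ l * c l := by
        rw [← Finset.sum_add_distrib]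
        refine Finset.sum_congr rfl fun l _ => ?_
        rw [map_mul]
        ring
      rw [final, sum_phi_c hodd h1]
      push_cast
      ring
    rw [stepE, stepF]
    ring
  rw [stepA, stepB, stepC, stepU, T_eq_c h1]
  push_cast
  ring


/-- generic counting of (t, w) with t² = g w and condition Q w -/
lemma card_tsq {β : Type} [Fintype β] [DecidableEq β] (hodd : Odd p)
    (Q : β → Prop) [DecidablePred Q] (g : β → ZMod p) :
    (Nat.card {v : ZMod p × β // Q v.2 ∧ v.1 ^ 2 = g v.2} : ℤ)
      = ∑ w ∈ univ.filter Q, (φ (g w) + 1) := by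
  rw [Nat.card_eq_fintype_card, Fintype.card_subtype]
  have fib : (univ.filter fun v : ZMod p × β => Q v.2 ∧ v.1 ^ 2 = g v.2).card
      = ∑ w ∈ univ.filter Q, (univ.filter fun t : ZMod p => t ^ 2 = g w).card := by
    rw [Finset.card_eq_sum_card_fiberwise (f := fun v => v.2) (t := univ.filter Q)
      (fun v hv => by
        simp only [mem_coe, mem_filter, mem_univ, true_and] at hv ⊢
        exact hv.1)]
    refine Finset.sum_congr rfl fun w hw => ?_
    simp only [mem_filter, mem_univ, true_and] at hw
    rw [Finset.filter_filter]
    refine Finset.card_nbij' (fun v => v.1) (fun t => (t, w)) ?_ ?_ ?_ ?_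
    · intro v hv
      simp only [mem_coe, mem_filter, mem_univ, true_and] at hv ⊢
      rcases hv with ⟨⟨_, heq⟩, hw2⟩
      rw [← hw2]
      exact heq
    · intro t ht
      simp only [mem_coe, mem_filter, mem_univ, true_and] at ht ⊢
      exact ⟨⟨hw, ht⟩, trivial⟩
    · intro v hv
      simp only [mem_coe, mem_filter, mem_univ, true_and] at hv
      rw [← hv.2]
    · intro t _
      rfl
  rw [fib]
  push_cast
  exact Finset.sum_congr rfl fun w _ => card_sqrts hodd (g w)

/-- the point count of y² = x³ - x -/
lemma card_curve (hodd : Odd p) :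
    (Nat.card {xy : ZMod p × ZMod p // xy.2 ^ 2 = xy.1 ^ 3 - xy.1} : ℤ)
      = (p : ℤ) + ∑ x : ZMod p, φ (x ^ 3 - x) := by
  have e : {xy : ZMod p × ZMod p // xy.2 ^ 2 = xy.1 ^ 3 - xy.1}
      ≃ {v : ZMod p × ZMod p // True ∧ v.1 ^ 2 = v.2 ^ 3 - v.2} := by
    refine Equiv.subtypeEquiv (Equiv.prodComm _ _) fun xy => ?_
    simp [Equiv.prodComm]
  rw [Nat.card_congr e, card_tsq hodd (fun _ => True) (fun x => x ^ 3 - x),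
    Finset.filter_true, Finset.sum_add_distrib, Finset.sum_const, Finset.card_univ,
    ZMod.card]
  push_cast
  ring


lemma card_ne_zero : ((univ.filter fun x : ZMod p => ¬ x = 0).card : ℤ) = (p : ℤ) - 1 := by
  rw [Finset.filter_not, Finset.card_sdiff_of_subset (Finset.filter_subset _ _)]
  have h1 : (univ.filter fun x : ZMod p => x = 0).card = 1 := by
    rw [Finset.filter_eq']
    simp
  rw [h1, Finset.card_univ, ZMod.card]
  have hp1 : 1 ≤ p := (Fact.out : p.Prime).one_lt.le
  push_cast [Nat.cast_sub hp1]
  ring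


end St13

open St13 in
/-- from the proof of Proposition 4.6 of the paper.
Let `p` be an odd prime, `φ` the quadratic character of `F_p`, `c ∈ F_p` with `c ≠ 0`,
`a₂ = p − #{(x,y) : y² = x³ − x}`, and `a₃ = a₂² − 2p` if `p ≡ 1 (mod 4)`, `a₃ = 0` if
`p ≡ 3 (mod 4)`.  Then the number of `(t,x,y,z) ∈ F_p⁴` with `(x,y,z) ≠ (0,0,0)` and
`t² = c·x·y·z·(x+y)·(y+z)·(−x+z)` equals `(p−1)·(p² + p + 1 + φ(c)·a₃)`. -/
theorem statement13 (p : ℕ) [Fact p.Prime] (hodd : Odd p)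
    (c : ZMod p) (hc : c ≠ 0)
    (a2 : ℤ)
    (ha2 : a2 = p - Nat.card {xy : ZMod p × ZMod p // xy.2 ^ 2 = xy.1 ^ 3 - xy.1})
    (a3 : ℤ)
    (ha31 : p % 4 = 1 → a3 = a2 ^ 2 - 2 * p)
    (ha33 : p % 4 = 3 → a3 = 0) :
    (Nat.card {v : ZMod p × ZMod p × ZMod p × ZMod p //
        (v.2.1, v.2.2.1, v.2.2.2) ≠ (0, 0, 0) ∧
        v.1 ^ 2 = c * v.2.1 * v.2.2.1 * v.2.2.2 * (v.2.1 + v.2.2.1) *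
          (v.2.2.1 + v.2.2.2) * (-v.2.1 + v.2.2.2)} : ℤ) =
      (p - 1) * (p ^ 2 + p + 1 + quadraticChar (ZMod p) c * a3) := by
  have hp2 : ringChar (ZMod p) ≠ 2 := hchar hodd
  set TT : ℤ := ∑ X : ZMod p, ∑ Y : ZMod p,
    quadraticChar (ZMod p) (X * Y * (X + Y) * (Y + 1) * (1 - X)) with hTT
  -- Step 1 : TT = a3
  have hT : TT = a3 := by
    have hp4 : p % 4 = 1 ∨ p % 4 = 3 := Nat.odd_mod_four_iff.mp (Nat.odd_iff.mp hodd)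
    rcases hp4 with h4 | h4
    · -- p ≡ 1 mod 4
      have h1 : quadraticChar (ZMod p) (-1) = 1 := by
        rw [quadraticChar_neg_one hp2, ZMod.card]
        exact ZMod.χ₄_nat_one_mod_four h4
      have ha2' : a2 = - ∑ x : ZMod p, quadraticChar (ZMod p) (x ^ 3 - x) := by
        rw [ha2, card_curve hodd]
        ring
      have hA0 : ∑ u : ZMod p, quadraticChar (ZMod p) (u * (1 - u ^ 2)) = -a2 := by
        rw [ha2', neg_neg]
        refine Finset.sum_congr rfl fun u _ => ?_
        have : (u * (1 - u ^ 2) : ZMod p) = -1 * (u ^ 3 - u) := by ring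
        rw [this, map_mul, h1, one_mul]
      have := main_chain hodd h1
      rw [hA0, ha31 h4] at *
      linarith [this]
    · -- p ≡ 3 mod 4
      have h1 : quadraticChar (ZMod p) (-1) = -1 := by
        rw [quadraticChar_neg_one hp2, ZMod.card]
        exact ZMod.χ₄_nat_three_mod_four h4
      rw [ha33 h4, hTT]
      exact T_eq_zero hodd h1
  -- Step 2 : the count
  set Q : ZMod p × ZMod p × ZMod p → Prop :=
    fun w => (w.1, w.2.1, w.2.2) ≠ ((0 : ZMod p), (0 : ZMod p), (0 : ZMod p)) with hQ
  set g : ZMod p × ZMod p × ZMod p → ZMod p :=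
    fun w => c * w.1 * w.2.1 * w.2.2 * (w.1 + w.2.1) * (w.2.1 + w.2.2) * (-w.1 + w.2.2)
    with hg
  have hcount : (Nat.card {v : ZMod p × ZMod p × ZMod p × ZMod p //
        (v.2.1, v.2.2.1, v.2.2.2) ≠ (0, 0, 0) ∧
        v.1 ^ 2 = c * v.2.1 * v.2.2.1 * v.2.2.2 * (v.2.1 + v.2.2.1) *
          (v.2.2.1 + v.2.2.2) * (-v.2.1 + v.2.2.2)} : ℤ)
      = ∑ w ∈ univ.filter Q, (quadraticChar (ZMod p) (g w) + 1) :=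
    card_tsq hodd Q g
  have hsingle : (univ.filter fun w : ZMod p × ZMod p × ZMod p => ¬ Q w)
      = {((0 : ZMod p), (0 : ZMod p), (0 : ZMod p))} := by
    have hiff : ∀ w : ZMod p × ZMod p × ZMod p,
        ((w.1, w.2.1, w.2.2) = ((0 : ZMod p), (0 : ZMod p), (0 : ZMod p)))
          ↔ w = ((0 : ZMod p), (0 : ZMod p), (0 : ZMod p)) := fun w => Iff.rfl
    ext w
    simp only [mem_filter, mem_univ, true_and, mem_singleton, hQ, not_not, hiff]
  have hsplit : ∑ w ∈ univ.filter Q, (quadraticChar (ZMod p) (g w) + 1)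
      = (∑ w : ZMod p × ZMod p × ZMod p, (quadraticChar (ZMod p) (g w) + 1)) - 1 := by
    have hadd := Finset.sum_filter_add_sum_filter_not univ Q
      (fun w => quadraticChar (ZMod p) (g w) + 1)
    have hzero : ∑ w ∈ univ.filter (fun w => ¬ Q w),
        (quadraticChar (ZMod p) (g w) + 1) = 1 := by
      rw [hsingle, Finset.sum_singleton]
      have : g ((0 : ZMod p), (0 : ZMod p), (0 : ZMod p)) = 0 := by
        rw [hg]
        simp
      rw [this]
      simp
    linarith [hadd, hzero]
  have htotal : ∑ w : ZMod p × ZMod p × ZMod p, (quadraticChar (ZMod p) (g w) + 1)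
      = quadraticChar (ZMod p) c * (((p : ℤ) - 1) * TT) + (p : ℤ) ^ 3 := by
    rw [Finset.sum_add_distrib, Finset.sum_const, Finset.card_univ]
    have hcard3 : (Fintype.card (ZMod p × ZMod p × ZMod p)) = p ^ 3 := by
      simp [ZMod.card]
      ring
    rw [hcard3]
    have hfactor : ∀ w : ZMod p × ZMod p × ZMod p, quadraticChar (ZMod p) (g w)
        = quadraticChar (ZMod p) c * quadraticChar (ZMod p)
            (w.1 * w.2.1 * w.2.2 * (w.1 + w.2.1) * (w.2.1 + w.2.2) * (-w.1 + w.2.2)) := by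
      intro w
      rw [hg, ← map_mul]
      congr 1
      ring
    rw [Finset.sum_congr rfl fun w _ => hfactor w, ← Finset.mul_sum]
    have hS : ∑ w : ZMod p × ZMod p × ZMod p, quadraticChar (ZMod p)
          (w.1 * w.2.1 * w.2.2 * (w.1 + w.2.1) * (w.2.1 + w.2.2) * (-w.1 + w.2.2))
        = ((p : ℤ) - 1) * TT := by
      rw [Fintype.sum_prod_type]
      have swap1 : ∀ x : ZMod p, ∑ yz : ZMod p × ZMod p, quadraticChar (ZMod p)
            (x * yz.1 * yz.2 * (x + yz.1) * (yz.1 + yz.2) * (-x + yz.2))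
          = ∑ z : ZMod p, ∑ y : ZMod p, quadraticChar (ZMod p)
            (x * y * z * (x + y) * (y + z) * (-x + z)) := by
        intro x
        rw [Fintype.sum_prod_type, Finset.sum_comm]
      rw [Finset.sum_congr rfl fun x _ => swap1 x, Finset.sum_comm]
      have hslice : ∀ z : ZMod p, (∑ x : ZMod p, ∑ y : ZMod p, quadraticChar (ZMod p)
            (x * y * z * (x + y) * (y + z) * (-x + z)))
          = if z = 0 then 0 else TT := by
        intro z
        by_cases hz : z = 0
        · rw [if_pos hz, hz]
          have : ∀ x y : ZMod p, (x * y * (0 : ZMod p) * (x + y) * (y + 0) * (-x + 0)) = 0 := by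
            intro x y
            ring
          simp only [this, MulChar.map_zero, Finset.sum_const_zero]
        · rw [if_neg hz, hTT]
          have hz3 : (z ^ 3 : ZMod p) ≠ 0 := pow_ne_zero 3 hz
          have reidx : ∑ x : ZMod p, ∑ y : ZMod p, quadraticChar (ZMod p)
                (x * y * z * (x + y) * (y + z) * (-x + z))
              = ∑ X : ZMod p, ∑ Y : ZMod p, quadraticChar (ZMod p)
                ((z * X) * (z * Y) * z * (z * X + z * Y) * (z * Y + z) * (-(z * X) + z)) := by
            refine (Fintype.sum_equiv (Equiv.mulLeft₀ z hz)
              (fun X => ∑ Y : ZMod p, quadraticChar (ZMod p)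
                ((z * X) * (z * Y) * z * (z * X + z * Y) * (z * Y + z) * (-(z * X) + z)))
              (fun x => ∑ y : ZMod p, quadraticChar (ZMod p)
                (x * y * z * (x + y) * (y + z) * (-x + z)))
              fun X => ?_).symm
            simp only [Equiv.mulLeft₀_apply]
            refine Fintype.sum_equiv (Equiv.mulLeft₀ z hz)
              (fun Y => quadraticChar (ZMod p)
                ((z * X) * (z * Y) * z * (z * X + z * Y) * (z * Y + z) * (-(z * X) + z)))
              (fun y => quadraticChar (ZMod p)
                ((z * X) * y * z * (z * X + y) * (y + z) * (-(z * X) + z)))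
              fun Y => ?_
            simp only [Equiv.mulLeft₀_apply]
          rw [reidx]
          refine Finset.sum_congr rfl fun X _ => Finset.sum_congr rfl fun Y _ => ?_
          have harg : (z * X * (z * Y) * z * (z * X + z * Y) * (z * Y + z) * (-(z * X) + z))
              = (z ^ 3) ^ 2 * (X * Y * (X + Y) * (Y + 1) * (1 - X)) := by
            ring
          rw [harg, phi_sq_mul hz3]
      rw [Finset.sum_congr rfl fun z _ => hslice z, Finset.sum_ite,
        Finset.sum_const_zero, Finset.sum_const, zero_add, nsmul_eq_mul]
      rw [St13.card_ne_zero]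
    rw [hS]
    push_cast
    ring
  rw [hcount, hsplit, htotal, hT]
  push_cast
  ring
end
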